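/- arXiv:2511.18041 — 7 statements merged into one kernel-verified Lean document; each statement's English description precedes it below -/
import Mathlib

section
/- Let f ∈ HL₀(B_X, Y) and define the transpose f^t : Y* → HL₀(B_X) by f^t(y*) = y* ∘ f. Then f^t is a bounded linear operator with ‖f^t‖ = L(f). -/
open Metric Set Filter Topology

noncomputable section

universe u

def LipImage {X Y : Type*} [NormedAddCommGroup X] [NormedSpace ℂ X]
    [NormedAddCommGroup Y] [NormedSpace ℂ Y] (f : X → Y) : Set Y :=
  {v | ∃ x ∈ ball (0 : X) 1, ∃ y ∈ ball (0 : X) 1, x ≠ y ∧ v = ‖x - y‖⁻¹ • (f x - f y)}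

def MemHL {X Y : Type*} [NormedAddCommGroup X] [NormedSpace ℂ X]
    [NormedAddCommGroup Y] [NormedSpace ℂ Y] (f : X → Y) : Prop :=
  f 0 = 0 ∧ DifferentiableOn ℂ f (ball (0 : X) 1) ∧
    ∃ C : ℝ, ∀ x ∈ ball (0 : X) 1, ∀ y ∈ ball (0 : X) 1, ‖f x - f y‖ ≤ C * ‖x - y‖

def LipNorm {X Y : Type*} [NormedAddCommGroup X] [NormedSpace ℂ X]
    [NormedAddCommGroup Y] [NormedSpace ℂ Y] (f : X → Y) : ℝ :=
  sSup ((fun p : X × X => ‖f p.1 - f p.2‖ / ‖p.1 - p.2‖) ''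
    {p : X × X | p.1 ∈ ball (0 : X) 1 ∧ p.2 ∈ ball (0 : X) 1 ∧ p.1 ≠ p.2})

/-- Auxiliary: the set whose supremum is `LipNorm f`. -/
def lipSet {X Y : Type*} [NormedAddCommGroup X] [NormedSpace ℂ X]
    [NormedAddCommGroup Y] [NormedSpace ℂ Y] (f : X → Y) : Set ℝ :=
  (fun p : X × X => ‖f p.1 - f p.2‖ / ‖p.1 - p.2‖) ''
    {p : X × X | p.1 ∈ ball (0 : X) 1 ∧ p.2 ∈ ball (0 : X) 1 ∧ p.1 ≠ p.2}

section helpers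

variable {X Y : Type*} [NormedAddCommGroup X] [NormedSpace ℂ X]
    [NormedAddCommGroup Y] [NormedSpace ℂ Y]

lemma lipNorm_eq (f : X → Y) : LipNorm f = sSup (lipSet f) := rfl

lemma lipNorm_nonneg (f : X → Y) : 0 ≤ LipNorm f := by
  rw [lipNorm_eq]
  refine Real.sSup_nonneg ?_
  rintro r ⟨p, hp, rfl⟩
  positivity

lemma bddAbove_lipSet (f : X → Y) (C : ℝ)
    (hC : ∀ x ∈ ball (0:X) 1, ∀ y ∈ ball (0:X) 1, ‖f x - f y‖ ≤ C * ‖x - y‖) :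
    BddAbove (lipSet f) := by
  refine ⟨max C 0, ?_⟩
  rintro r ⟨p, ⟨h1, h2, hne⟩, rfl⟩
  have hsub : (0:ℝ) < ‖p.1 - p.2‖ := by
    simpa [sub_ne_zero] using hne
  rw [div_le_iff₀ hsub]
  calc ‖f p.1 - f p.2‖ ≤ C * ‖p.1 - p.2‖ := hC p.1 h1 p.2 h2
    _ ≤ max C 0 * ‖p.1 - p.2‖ := by gcongr; exact le_max_left _ _

lemma quotient_le_lipNorm (f : X → Y) (hb : BddAbove (lipSet f)) {x y : X}
    (hx : x ∈ ball (0:X) 1) (hy : y ∈ ball (0:X) 1) (hne : x ≠ y) :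
    ‖f x - f y‖ / ‖x - y‖ ≤ LipNorm f :=
  le_csSup hb ⟨(x, y), ⟨hx, hy, hne⟩, rfl⟩

lemma lipNorm_le (f : X → Y) {M : ℝ} (hM : 0 ≤ M)
    (h : ∀ x ∈ ball (0:X) 1, ∀ y ∈ ball (0:X) 1, x ≠ y → ‖f x - f y‖ / ‖x - y‖ ≤ M) :
    LipNorm f ≤ M := by
  rw [lipNorm_eq]
  refine Real.sSup_le ?_ hM
  rintro r ⟨p, ⟨h1, h2, hne⟩, rfl⟩
  exact h p.1 h1 p.2 h2 hne

end helpers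

/-- the transpose f^t : Y* → HL₀(B_X), y* ↦ y* ∘ f, is a well-defined
bounded linear operator whose operator norm equals L(f).  (Linearity of y* ↦ y* ∘ f is
definitional; boundedness and the value of the operator norm are stated explicitly:
the operator norm is the supremum of L(y* ∘ f) over the closed unit ball of Y*.) -/
theorem transpose_bounded_norm_eq {X Y : Type*}
    [NormedAddCommGroup X] [NormedSpace ℂ X] [CompleteSpace X]
    [NormedAddCommGroup Y] [NormedSpace ℂ Y] [CompleteSpace Y]
    (f : X → Y) (hf : MemHL f) :
    (∀ φ : Y →L[ℂ] ℂ, MemHL (fun x => φ (f x))) ∧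
    (∀ φ : Y →L[ℂ] ℂ, LipNorm (fun x => φ (f x)) ≤ ‖φ‖ * LipNorm f) ∧
    sSup {r : ℝ | ∃ φ : Y →L[ℂ] ℂ, ‖φ‖ ≤ 1 ∧ r = LipNorm (fun x => φ (f x))}
      = LipNorm f := by
  obtain ⟨hf0, hfd, C, hC⟩ := hf
  have hbf : BddAbove (lipSet f) := bddAbove_lipSet f C hC
  -- Part 1
  have part1 : ∀ φ : Y →L[ℂ] ℂ, MemHL (fun x => φ (f x)) := by
    intro φ
    refine ⟨by simp [hf0], φ.differentiable.comp_differentiableOn hfd, ‖φ‖ * C, ?_⟩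
    intro x hx y hy
    calc ‖φ (f x) - φ (f y)‖ = ‖φ (f x - f y)‖ := by rw [map_sub]
      _ ≤ ‖φ‖ * ‖f x - f y‖ := φ.le_opNorm _
      _ ≤ ‖φ‖ * (C * ‖x - y‖) := by
          exact mul_le_mul_of_nonneg_left (hC x hx y hy) (norm_nonneg _)
      _ = ‖φ‖ * C * ‖x - y‖ := by ring
  -- Part 2
  have part2 : ∀ φ : Y →L[ℂ] ℂ, LipNorm (fun x => φ (f x)) ≤ ‖φ‖ * LipNorm f := by
    intro φ
    refine lipNorm_le _ (mul_nonneg (norm_nonneg _) (lipNorm_nonneg f)) ?_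
    intro x hx y hy hne
    have hsub : (0:ℝ) < ‖x - y‖ := by simpa [sub_ne_zero] using hne
    calc ‖φ (f x) - φ (f y)‖ / ‖x - y‖ ≤ ‖φ‖ * ‖f x - f y‖ / ‖x - y‖ := by
          gcongr
          calc ‖φ (f x) - φ (f y)‖ = ‖φ (f x - f y)‖ := by rw [map_sub]
            _ ≤ ‖φ‖ * ‖f x - f y‖ := φ.le_opNorm _
      _ = ‖φ‖ * (‖f x - f y‖ / ‖x - y‖) := by ring
      _ ≤ ‖φ‖ * LipNorm f :=
          mul_le_mul_of_nonneg_left (quotient_le_lipNorm f hbf hx hy hne) (norm_nonneg _)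
  refine ⟨part1, part2, ?_⟩
  set R : Set ℝ := {r : ℝ | ∃ φ : Y →L[ℂ] ℂ, ‖φ‖ ≤ 1 ∧ r = LipNorm (fun x => φ (f x))}
  have hRbdd : BddAbove R := by
    refine ⟨LipNorm f, ?_⟩
    rintro r ⟨φ, hφ, rfl⟩
    calc LipNorm (fun x => φ (f x)) ≤ ‖φ‖ * LipNorm f := part2 φ
      _ ≤ 1 * LipNorm f := mul_le_mul_of_nonneg_right hφ (lipNorm_nonneg f)
      _ = LipNorm f := one_mul _
  have hzero : (0:ℝ) ∈ R := by
    refine ⟨0, by simp, ?_⟩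
    refine le_antisymm (lipNorm_nonneg _) (lipNorm_le _ le_rfl ?_)
    intro x hx y hy hne
    simp
  refine le_antisymm ?_ ?_
  · refine Real.sSup_le ?_ (lipNorm_nonneg f)
    rintro r ⟨φ, hφ, rfl⟩
    calc LipNorm (fun x => φ (f x)) ≤ ‖φ‖ * LipNorm f := part2 φ
      _ ≤ 1 * LipNorm f := mul_le_mul_of_nonneg_right hφ (lipNorm_nonneg f)
      _ = LipNorm f := one_mul _
  · refine lipNorm_le f (le_csSup hRbdd hzero) ?_
    intro x hx y hy hne
    by_cases hfe : f x = f y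
    · have : ‖f x - f y‖ / ‖x - y‖ = 0 := by simp [hfe]
      rw [this]
      exact le_csSup hRbdd hzero
    · obtain ⟨φ, hφn, hφv⟩ := exists_dual_vector ℂ (f x - f y) (norm_ne_zero_iff.mpr (sub_ne_zero.mpr hfe))
      have hval : ‖φ (f x) - φ (f y)‖ = ‖f x - f y‖ := by
        rw [← map_sub, hφv]
        simp
      have hbφ : BddAbove (lipSet (fun x => φ (f x))) := by
        obtain ⟨_, _, C', hC'⟩ := part1 φ
        exact bddAbove_lipSet _ C' hC'
      have h1 : ‖f x - f y‖ / ‖x - y‖ ≤ LipNorm (fun x => φ (f x)) := by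
        rw [← hval]
        exact quotient_le_lipNorm (fun x => φ (f x)) hbφ hx hy hne
      refine h1.trans (le_csSup hRbdd ⟨φ, le_of_eq hφn, rfl⟩)
end
end

section
/- Let A be an operator ideal and let f ∈ HL₀(B_X, Y). Then f is A-compact holomorphic Lipschitz (i.e., Im_L(f) is relatively A-compact in Y) if and only if its linearization T_f ∈ L(G₀(B_X), Y) is an A-compact operator, i.e., T_f(closed unit ball of G₀(B_X)) is relatively A-compact in Y. Moreover m_A(Im_L(f)) = m_A(T_f(B̄_{G₀(B_X)})). -/
open Metric Set Filter Topology

noncomputable section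

universe u

/-- A bundled complex Banach space. -/
structure BanachSp : Type (u + 1) where
  carrier : Type u
  [nacg : NormedAddCommGroup carrier]
  [nsc : NormedSpace ℂ carrier]
  [cs : CompleteSpace carrier]

attribute [instance] BanachSp.nacg BanachSp.nsc BanachSp.cs

/-- Relative 𝒜-compactness (Carl–Stephani): K ⊆ T(M) for some Banach space W,
T ∈ 𝒜(W, Z) and relatively compact M ⊆ W. -/
def RelACompact (A : ∀ W Z : BanachSp.{u}, Set (W.carrier →L[ℂ] Z.carrier))
    (Z : BanachSp.{u}) (K : Set Z.carrier) : Prop :=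
  ∃ (W : BanachSp.{u}) (T : W.carrier →L[ℂ] Z.carrier) (M : Set W.carrier),
    T ∈ A W Z ∧ IsCompact (closure M) ∧ K ⊆ T '' M

/-- The measure m_𝒜 of 𝒜-compactness of a set. -/
def mA (A : ∀ W Z : BanachSp.{u}, Set (W.carrier →L[ℂ] Z.carrier))
    (nA : ∀ W Z : BanachSp.{u}, (W.carrier →L[ℂ] Z.carrier) → ℝ)
    (Z : BanachSp.{u}) (K : Set Z.carrier) : ℝ :=
  sInf {r : ℝ | ∃ (W : BanachSp.{u}) (T : W.carrier →L[ℂ] Z.carrier) (M : Set W.carrier),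
    T ∈ A W Z ∧ IsCompact (closure M) ∧ K ⊆ T '' M ∧ r = nA W Z T}

section Aux

variable {E F : Type*} [NormedAddCommGroup E] [NormedSpace ℂ E]
  [NormedAddCommGroup F] [NormedSpace ℂ F]

/-- The closure of the absolutely convex hull of a relatively compact set is compact. -/
lemma aux_isCompact_closure_convexHull_balancedHull [CompleteSpace E] {M : Set E}
    (h : IsCompact (closure M)) :
    IsCompact (closure (convexHull ℝ (balancedHull ℂ M))) := by
  have tb : TotallyBounded (balancedHull ℂ M) := by
    have hc : IsCompact ((fun p : ℂ × E => p.1 • p.2) ''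
        (Metric.closedBall (0 : ℂ) 1 ×ˢ closure M)) :=
      ((isCompact_closedBall (0 : ℂ) 1).prod h).image continuous_smul
    refine hc.totallyBounded.subset ?_
    rintro x hx
    rw [mem_balancedHull_iff] at hx
    obtain ⟨r, hr, y, hy, rfl⟩ := hx
    exact ⟨(r, y), ⟨by simpa using hr, subset_closure hy⟩, rfl⟩
  exact TotallyBounded.isCompact_of_isClosed
    (totallyBounded_convexHull.2 tb).closure isClosed_closure

lemma aux_image_balancedHull (T : E →L[ℂ] F) (s : Set E) :
    T '' balancedHull ℂ s = balancedHull ℂ (T '' s) := by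
  ext x
  simp only [mem_image, mem_balancedHull_iff]
  constructor
  · rintro ⟨y, ⟨r, hr, hy⟩, rfl⟩
    obtain ⟨z, hz, rfl⟩ := hy
    exact ⟨r, hr, map_smul T r z ▸ smul_mem_smul_set (mem_image_of_mem _ hz)⟩
  · rintro ⟨r, hr, hy⟩
    obtain ⟨w, ⟨z, hz, rfl⟩, rfl⟩ := hy
    exact ⟨r • z, ⟨r, hr, smul_mem_smul_set hz⟩, map_smul T r z⟩

lemma aux_image_convexHull_balancedHull (T : E →L[ℂ] F) (s : Set E) :
    T '' convexHull ℝ (balancedHull ℂ s) = convexHull ℝ (balancedHull ℂ (T '' s)) := by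
  have h := ((T : E →ₗ[ℂ] F).restrictScalars ℝ).image_convexHull (balancedHull ℂ s)
  rw [← aux_image_balancedHull T s]
  exact h

end Aux

/-- for f ∈ HL₀(B_X, Y) with linearization T_f on the free space
G₀(B_X) (presented by its universal property: δ ∈ HL₀, span of δ(B_X) dense,
T_f ∘ δ = f, and the closed unit ball of G₀(B_X) is the closed absolutely convex
hull of Im_L(δ)), the Lipschitz image Im_L(f) is relatively 𝒜-compact in Y iff
T_f is an 𝒜-compact operator, and the measures of 𝒜-compactness agree:
m_𝒜(Im_L(f)) = m_𝒜(T_f(B̄_{G₀(B_X)})). -/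
theorem aCompact_iff_linearization_aCompact {X : Type u}
    [NormedAddCommGroup X] [NormedSpace ℂ X] [CompleteSpace X]
    (A : ∀ W Z : BanachSp.{u}, Set (W.carrier →L[ℂ] Z.carrier))
    (hA_comp : ∀ (U W Z V : BanachSp.{u}) (S : Z.carrier →L[ℂ] V.carrier)
      (T : W.carrier →L[ℂ] Z.carrier) (R : U.carrier →L[ℂ] W.carrier),
      T ∈ A W Z → S.comp (T.comp R) ∈ A U V)
    (hA_rank1 : ∀ (W Z : BanachSp.{u}) (φ : W.carrier →L[ℂ] ℂ) (z : Z.carrier),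
      φ.smulRight z ∈ A W Z)
    (nA : ∀ W Z : BanachSp.{u}, (W.carrier →L[ℂ] Z.carrier) → ℝ)
    (hnA_nonneg : ∀ (W Z : BanachSp.{u}) (T : W.carrier →L[ℂ] Z.carrier), 0 ≤ nA W Z T)
    (hnA_op : ∀ (W Z : BanachSp.{u}) (T : W.carrier →L[ℂ] Z.carrier), ‖T‖ ≤ nA W Z T)
    (hnA_comp : ∀ (U W Z V : BanachSp.{u}) (S : Z.carrier →L[ℂ] V.carrier)
      (T : W.carrier →L[ℂ] Z.carrier) (R : U.carrier →L[ℂ] W.carrier),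
      T ∈ A W Z → nA U V (S.comp (T.comp R)) ≤ ‖S‖ * nA W Z T * ‖R‖)
    (G Y : BanachSp.{u})
    (δX : X → G.carrier) (hδ : MemHL δX)
    (hdense : Dense (Submodule.span ℂ (δX '' ball (0 : X) 1) : Set G.carrier))
    (hball : closedBall (0 : G.carrier) 1
      = closure (convexHull ℝ (balancedHull ℂ (LipImage δX))))
    (f : X → Y.carrier) (hf : MemHL f)
    (Tf : G.carrier →L[ℂ] Y.carrier)
    (hTf : ∀ x ∈ ball (0 : X) 1, Tf (δX x) = f x) :
    (RelACompact A Y (LipImage f) ↔ RelACompact A Y (Tf '' closedBall 0 1)) ∧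
      mA A nA Y (LipImage f) = mA A nA Y (Tf '' closedBall 0 1) := by
  -- The Lipschitz image of f is the image under Tf of the Lipschitz image of δX.
  have hIm : LipImage f = Tf '' LipImage δX := by
    ext v
    constructor
    · rintro ⟨x, hx, y, hy, hxy, rfl⟩
      refine ⟨‖x - y‖⁻¹ • (δX x - δX y), ⟨x, hx, y, hy, hxy, rfl⟩, ?_⟩
      rw [Tf.map_smul_of_tower, map_sub, hTf x hx, hTf y hy]
    · rintro ⟨w, ⟨x, hx, y, hy, hxy, rfl⟩, rfl⟩
      refine ⟨x, hx, y, hy, hxy, ?_⟩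
      rw [Tf.map_smul_of_tower, map_sub, hTf x hx, hTf y hy]
  have hδball : LipImage δX ⊆ closedBall (0 : G.carrier) 1 := by
    rw [hball]
    exact fun v hv => subset_closure (subset_convexHull ℝ _ (subset_balancedHull ℂ hv))
  have hsub1 : LipImage f ⊆ Tf '' closedBall 0 1 := by
    rw [hIm]; exact image_mono hδball
  -- Key construction: any 𝒜-compact factorization of Im_L(f) yields one of Tf(B̄) with the
  -- same operator T.
  have key : ∀ (W : BanachSp.{u}) (T : W.carrier →L[ℂ] Y.carrier) (M : Set W.carrier),
      IsCompact (closure M) → LipImage f ⊆ T '' M →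
      ∃ M' : Set W.carrier, IsCompact (closure M') ∧ Tf '' closedBall 0 1 ⊆ T '' M' := by
    intro W T M hM hsub
    refine ⟨closure (convexHull ℝ (balancedHull ℂ M)), ?_, ?_⟩
    · rw [closure_closure]
      exact aux_isCompact_closure_convexHull_balancedHull hM
    · have h1 : Tf '' closedBall 0 1 ⊆ closure (convexHull ℝ (balancedHull ℂ (LipImage f))) := by
        rw [hball]
        refine (image_closure_subset_closure_image Tf.continuous).trans ?_
        rw [aux_image_convexHull_balancedHull, ← hIm]
      refine h1.trans ?_
      have h2 : convexHull ℝ (balancedHull ℂ (LipImage f)) ⊆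
          T '' convexHull ℝ (balancedHull ℂ M) := by
        rw [aux_image_convexHull_balancedHull]
        exact convexHull_mono (balancedHull_mono hsub)
      have hcpt : IsCompact (T '' closure (convexHull ℝ (balancedHull ℂ M))) :=
        (aux_isCompact_closure_convexHull_balancedHull hM).image T.continuous
      exact (closure_mono h2).trans
        (closure_minimal (image_mono subset_closure) hcpt.isClosed)
  constructor
  · constructor
    · rintro ⟨W, T, M, hTA, hM, hK⟩
      obtain ⟨M', hM', hK'⟩ := key W T M hM hK
      exact ⟨W, T, M', hTA, hM', hK'⟩
    · rintro ⟨W, T, M, hTA, hM, hK⟩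
      exact ⟨W, T, M, hTA, hM, hsub1.trans hK⟩
  · unfold mA
    congr 1
    ext r
    constructor
    · rintro ⟨W, T, M, hTA, hM, hK, rfl⟩
      obtain ⟨M', hM', hK'⟩ := key W T M hM hK
      exact ⟨W, T, M', hTA, hM', hK', rfl⟩
    · rintro ⟨W, T, M, hTA, hM, hK, rfl⟩
      exact ⟨W, T, M, hTA, hM, hsub1.trans hK, rfl⟩
end
end

section
/- Let A be an operator ideal and f ∈ HL₀(B_X, Y). Then Im_L(f) is relatively A-compact if and only if there exist a Banach space Z and an operator T ∈ A(Z, Y) such that for every ε > 0 there exist finitely many points y₁,…,y_k ∈ Y with Im_L(f) ⊆ ⋃_{j=1}^{k} (y_j + ε T(B̄_Z)). -/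
open Metric Set Filter Topology

noncomputable section

universe u
section Aux

variable {X : Type*} [NormedAddCommGroup X] [NormedSpace ℂ X]

private lemma real_smul_eq (r : ℝ) (v : X) : r • v = (r : ℂ) • v := by
  rw [← algebraMap_smul ℂ r v]; norm_num

private lemma segok_rot (a : X) (ha : a ≠ 0) (t : ℝ) :
    (1 - t) • a + t • (Complex.I • a) ≠ 0 := by
  have h : (1 - t) • a + t • (Complex.I • a) = (((1 - t : ℝ) : ℂ) + (t : ℂ) * Complex.I) • a := by
    rw [real_smul_eq (1 - t) a, real_smul_eq t (Complex.I • a), smul_smul, add_smul]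
  rw [h]
  intro hzero
  rcases smul_eq_zero.mp hzero with hc | hv
  · have him := congrArg Complex.im hc
    have hre := congrArg Complex.re hc
    simp at him hre
    linarith [him, hre]
  · exact ha hv

private lemma segok_of_not (a b : X) (ha : a ≠ 0) (hb : b ≠ 0)
    (h : ∃ t : ℝ, t ∈ Icc (0:ℝ) 1 ∧ (1 - t) • a + t • b = 0) (s : ℝ) :
    (1 - s) • (Complex.I • a) + s • b ≠ 0 := by
  obtain ⟨t, ht, heq⟩ := h
  have ht0 : t ≠ 0 := by
    rintro rfl; simp at heq; exact ha heq
  have hb' : b = -((t⁻¹ * (1 - t)) • a) := by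
    have : t • b = -((1 - t) • a) := by
      rw [eq_neg_iff_add_eq_zero, add_comm]; exact heq
    calc b = t⁻¹ • (t • b) := by rw [smul_smul, inv_mul_cancel₀ ht0, one_smul]
    _ = t⁻¹ • -((1 - t) • a) := by rw [this]
    _ = -((t⁻¹ * (1 - t)) • a) := by rw [smul_neg, smul_smul]
  set r : ℝ := t⁻¹ * (1 - t) with hr
  have hrne : r ≠ 0 := by
    rintro h0; rw [h0] at hb'; simp at hb'; exact hb hb'
  intro hzero
  rw [hb'] at hzero
  have hL : (1 - s) • (Complex.I • a) + s • -(r • a)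
      = (((1 - s : ℝ) : ℂ) * Complex.I - ((s * r : ℝ) : ℂ)) • a := by
    rw [real_smul_eq (1 - s) (Complex.I • a), smul_smul, smul_neg,
      real_smul_eq s (r • a), real_smul_eq r a, smul_smul, ← neg_smul, ← add_smul]
    congr 1
    push_cast
    ring
  have h2 : (((1 - s : ℝ) : ℂ) * Complex.I - ((s * r : ℝ) : ℂ)) • a = 0 := by
    rw [← hL]; exact hzero
  rcases smul_eq_zero.mp h2 with hc | hv
  · have him := congrArg Complex.im hc
    have hre := congrArg Complex.re hc
    simp at him hre
    have hs1 : s = 1 := by linarith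
    rcases hre with h1 | h1
    · rw [h1] at hs1; norm_num at hs1
    · exact hrne h1
  · exact ha hv

end Aux

section Pre

variable {X : Type*} [NormedAddCommGroup X] [NormedSpace ℂ X]

/-- The domain of the Lipschitz-image map. -/
private def Pset (X : Type*) [NormedAddCommGroup X] [NormedSpace ℂ X] : Set (X × X) :=
  {q : X × X | q.1 ∈ ball (0 : X) 1 ∧ q.2 ∈ ball (0 : X) 1 ∧ q.1 ≠ q.2}

private def Eseg (a b : X) : Set (X × X) :=
  (fun t : ℝ => ((1 - t) • a + t • b, -((1 - t) • a + t • b))) '' Icc 0 1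

private lemma Eseg_pre (a b : X) : IsPreconnected (Eseg a b) := by
  apply IsPreconnected.image isPreconnected_Icc
  apply Continuous.continuousOn
  have h1 : Continuous fun t : ℝ => (1 - t) • a + t • b := by
    exact ((continuous_const.sub continuous_id).smul continuous_const).add
      (continuous_id.smul continuous_const)
  exact h1.prodMk h1.neg

private lemma Eseg_mem_left (a b : X) : (a, -a) ∈ Eseg a b := by
  refine ⟨0, ⟨le_refl _, zero_le_one⟩, ?_⟩
  norm_num

private lemma Eseg_mem_right (a b : X) : (b, -b) ∈ Eseg a b := by
  refine ⟨1, ⟨zero_le_one, le_refl _⟩, ?_⟩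
  norm_num

private lemma Eseg_sub (a b : X) (hna : ‖a‖ < 1) (hnb : ‖b‖ < 1)
    (hseg : ∀ t ∈ Icc (0:ℝ) 1, (1 - t) • a + t • b ≠ 0) :
    Eseg a b ⊆ Pset X := by
  rintro p ⟨t, ht, rfl⟩
  have hmem : (1 - t) • a + t • b ∈ ball (0 : X) 1 := by
    exact (convex_ball (0:X) 1) (mem_ball_zero_iff.mpr hna) (mem_ball_zero_iff.mpr hnb)
      (by linarith [ht.2] : (0:ℝ) ≤ 1 - t) ht.1 (by ring)
  have hne := hseg t ht
  refine ⟨hmem, ?_, ?_⟩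
  · rw [mem_ball_zero_iff, norm_neg]; exact mem_ball_zero_iff.mp hmem
  · show (1 - t) • a + t • b ≠ -((1 - t) • a + t • b)
    intro hcontra
    apply hne
    have h0 : (2:ℝ) • ((1 - t) • a + t • b) = 0 := by
      rw [two_smul]; nth_rewrite 2 [hcontra]; abel
    calc (1 - t) • a + t • b = (2:ℝ)⁻¹ • ((2:ℝ) • ((1 - t) • a + t • b)) := by
          rw [smul_smul]; norm_num
    _ = 0 := by rw [h0, smul_zero]

private lemma exists_W (a b : X) (ha : a ≠ 0) (hb : b ≠ 0) (hna : ‖a‖ < 1) (hnb : ‖b‖ < 1) :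
    ∃ W : Set (X × X), IsPreconnected W ∧ W ⊆ Pset X ∧ (a, -a) ∈ W ∧ (b, -b) ∈ W := by
  have hIa : Complex.I • a ≠ 0 := by
    intro h
    rcases smul_eq_zero.mp h with h1 | h1
    · exact Complex.I_ne_zero h1
    · exact ha h1
  have hIan : ‖Complex.I • a‖ < 1 := by
    rw [norm_smul, Complex.norm_I, one_mul]; exact hna
  by_cases h : ∃ t : ℝ, t ∈ Icc (0:ℝ) 1 ∧ (1 - t) • a + t • b = 0
  · refine ⟨Eseg a (Complex.I • a) ∪ Eseg (Complex.I • a) b,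
      IsPreconnected.union (Complex.I • a, -(Complex.I • a))
        (Eseg_mem_right _ _) (Eseg_mem_left _ _) (Eseg_pre _ _) (Eseg_pre _ _),
      ?_, Or.inl (Eseg_mem_left _ _), Or.inr (Eseg_mem_right _ _)⟩
    apply union_subset
    · exact Eseg_sub _ _ hna hIan (fun t _ => segok_rot a ha t)
    · exact Eseg_sub _ _ hIan hnb (fun t _ => segok_of_not a b ha hb h t)
  · push_neg at h
    refine ⟨Eseg a b, Eseg_pre _ _, Eseg_sub _ _ hna hnb ?_, Eseg_mem_left _ _,
      Eseg_mem_right _ _⟩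
    intro t ht
    exact h t ht

end Pre

section Pre2

variable {X : Type*} [NormedAddCommGroup X] [NormedSpace ℂ X]

private lemma Pset_pre (x₀ y₀ : X) (hx₀ : x₀ ∈ ball (0:X) 1) (hy₀ : y₀ ∈ ball (0:X) 1)
    (hne₀ : x₀ ≠ y₀) : IsPreconnected (Pset X) := by
  set a₀ : X := (8:ℝ)⁻¹ • (x₀ - y₀) with ha₀def
  have hd₀ : x₀ - y₀ ≠ 0 := sub_ne_zero.mpr hne₀
  have ha₀ : a₀ ≠ 0 := by
    intro h
    apply hd₀
    calc x₀ - y₀ = (8:ℝ) • a₀ := by rw [ha₀def, smul_smul]; norm_num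
    _ = 0 := by rw [h, smul_zero]
  have hnorm8 : ∀ x y : X, x ∈ ball (0:X) 1 → y ∈ ball (0:X) 1 →
      ‖(8:ℝ)⁻¹ • (x - y)‖ < 4⁻¹ := by
    intro x y hx hy
    rw [norm_smul, Real.norm_eq_abs]
    have hx' := mem_ball_zero_iff.mp hx
    have hy' := mem_ball_zero_iff.mp hy
    have : ‖x - y‖ < 2 := lt_of_le_of_lt (norm_sub_le x y) (by linarith)
    rw [abs_of_pos (by norm_num : (0:ℝ) < 8⁻¹)]
    nlinarith [norm_nonneg (x - y)]
  have ha₀n : ‖a₀‖ < 1 := lt_trans (hnorm8 x₀ y₀ hx₀ hy₀) (by norm_num)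
  apply isPreconnected_of_forall (a₀, -a₀)
  rintro ⟨x, y⟩ ⟨hx, hy, hxy⟩
  set c : X := (8:ℝ)⁻¹ • (x - y) with hcdef
  have hd : x - y ≠ 0 := sub_ne_zero.mpr hxy
  have hc : c ≠ 0 := by
    intro h
    apply hd
    calc x - y = (8:ℝ) • c := by rw [hcdef, smul_smul]; norm_num
    _ = 0 := by rw [h, smul_zero]
  have hcn : ‖c‖ < 1 := lt_trans (hnorm8 x y hx hy) (by norm_num)
  -- the shrinking path from (x, y) to (c, -c)
  set φ : ℝ → X × X := fun t => ((1 - t) • x + t • c, (1 - t) • y + t • (-c)) with hφdef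
  have hφsub : φ '' Icc 0 1 ⊆ Pset X := by
    rintro p ⟨t, ht, rfl⟩
    have hcb : c ∈ ball (0:X) 1 := mem_ball_zero_iff.mpr hcn
    have hcb' : -c ∈ ball (0:X) 1 := by
      rw [mem_ball_zero_iff, norm_neg]; exact hcn
    have h1t : (0:ℝ) ≤ 1 - t := by linarith [ht.2]
    refine ⟨(convex_ball (0:X) 1) hx hcb h1t ht.1 (by ring),
      (convex_ball (0:X) 1) hy hcb' h1t ht.1 (by ring), ?_⟩
    show (1 - t) • x + t • c ≠ (1 - t) • y + t • (-c)
    intro hEq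
    have hkey : ((1 - t) • x + t • c) - ((1 - t) • y + t • (-c))
        = (1 - (3/4) * t) • (x - y) := by
      rw [hcdef]
      module
    rw [hEq, sub_self] at hkey
    have hco : (1 - (3/4) * t) ≠ 0 := by
      have := ht.2; intro h0; nlinarith
    apply hd
    calc x - y = (1 - (3/4)*t)⁻¹ • ((1 - (3/4)*t) • (x - y)) := by
          rw [smul_smul, inv_mul_cancel₀ hco, one_smul]
    _ = 0 := by rw [← hkey, smul_zero]
  obtain ⟨W, hWpre, hWsub, hWc, hWa₀⟩ := exists_W c a₀ hc ha₀ hcn ha₀n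
  refine ⟨φ '' Icc 0 1 ∪ W, union_subset hφsub hWsub, Or.inr hWa₀, ?_, ?_⟩
  · left
    refine ⟨0, ⟨le_refl _, zero_le_one⟩, ?_⟩
    rw [hφdef]
    norm_num
  · apply IsPreconnected.union (c, -c)
    · refine ⟨1, ⟨zero_le_one, le_refl _⟩, ?_⟩
      rw [hφdef]
      norm_num
    · exact hWc
    · apply IsPreconnected.image isPreconnected_Icc
      apply Continuous.continuousOn
      rw [hφdef]
      exact (((continuous_const.sub continuous_id).smul continuous_const).add
          (continuous_id.smul continuous_const)).prodMk
        (((continuous_const.sub continuous_id).smul continuous_const).add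
          (continuous_id.smul continuous_const))
    · exact hWpre

end Pre2

/-- the Lipschitz image Im_L(f) of f ∈ HL₀(B_X, Y) is relatively
𝒜-compact iff there are a Banach space Z and T ∈ 𝒜(Z, Y) such that for every ε > 0
there is a finite set y₁, …, y_k in Y with Im_L(f) ⊆ ⋃ⱼ (yⱼ + ε·T(B̄_Z)). -/
theorem aCompact_iff_eps_nets {X : Type u}
    [NormedAddCommGroup X] [NormedSpace ℂ X] [CompleteSpace X]
    (A : ∀ W Z : BanachSp.{u}, Set (W.carrier →L[ℂ] Z.carrier))
    (hA_comp : ∀ (U W Z V : BanachSp.{u}) (S : Z.carrier →L[ℂ] V.carrier)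
      (T : W.carrier →L[ℂ] Z.carrier) (R : U.carrier →L[ℂ] W.carrier),
      T ∈ A W Z → S.comp (T.comp R) ∈ A U V)
    (hA_rank1 : ∀ (W Z : BanachSp.{u}) (φ : W.carrier →L[ℂ] ℂ) (z : Z.carrier),
      φ.smulRight z ∈ A W Z)
    (Y : BanachSp.{u})
    (f : X → Y.carrier) (hf : MemHL f) :
    RelACompact A Y (LipImage f) ↔
      ∃ (Z : BanachSp.{u}) (T : Z.carrier →L[ℂ] Y.carrier), T ∈ A Z Y ∧
        ∀ ε > (0 : ℝ), ∃ (k : ℕ) (ys : Fin k → Y.carrier),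
          LipImage f ⊆ ⋃ j : Fin k,
            (fun w => ys j + ε • w) '' (T '' closedBall (0 : Z.carrier) 1) := by
  constructor
  · rintro ⟨W, T', M, hT', hMc, hKM⟩
    refine ⟨W, T', hT', ?_⟩
    intro ε hε
    have hMtb : TotallyBounded M := (hMc.totallyBounded).subset subset_closure
    obtain ⟨t, htfin, hcov⟩ := (totallyBounded_iff.mp hMtb) ε hε
    obtain ⟨s, rfl⟩ := htfin.exists_finset_coe
    refine ⟨s.card, fun j => T' ((s.equivFin.symm j : W.carrier)), ?_⟩
    intro v hv
    obtain ⟨m, hm, rfl⟩ := hKM hv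
    have hm2 := hcov hm
    rw [Set.mem_iUnion₂] at hm2
    obtain ⟨y, hyt, hym⟩ := hm2
    rw [Set.mem_iUnion]
    refine ⟨s.equivFin ⟨y, hyt⟩, ?_⟩
    rw [Set.mem_image]
    refine ⟨T' (ε⁻¹ • (m - y)), ⟨ε⁻¹ • (m - y), ?_, rfl⟩, ?_⟩
    · rw [mem_closedBall_zero_iff, norm_smul, Real.norm_eq_abs,
        abs_of_pos (inv_pos.mpr hε)]
      have hdist : ‖m - y‖ < ε := by
        rw [← dist_eq_norm]; exact mem_ball.mp hym
      rw [inv_mul_le_iff₀ hε]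
      nlinarith
    · simp only [Equiv.symm_apply_apply]
      rw [← T'.map_smul_of_tower, smul_smul,
        mul_inv_cancel₀ (ne_of_gt hε), one_smul, ← T'.map_add]
      congr 1
      abel
  · rintro ⟨Z, T, hT, hnet⟩
    by_cases hKe : LipImage f = ∅
    · exact ⟨Z, T, (∅ : Set Z.carrier), hT, by simp, by simp [hKe]⟩
    obtain ⟨v₀, hp₀⟩ := Set.nonempty_iff_ne_empty.mpr hKe
    obtain ⟨xb, hxb, yb, hyb, hxyb, hveq⟩ := hp₀
    have hp₀ : v₀ ∈ LipImage f := ⟨xb, hxb, yb, hyb, hxyb, hveq⟩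
    set ε : ℕ → ℝ := fun n => (2:ℝ)⁻¹ ^ n with hεdef
    have hεpos : ∀ n, 0 < ε n := fun n => pow_pos (by norm_num) n
    have hεsucc : ∀ n, ε (n+1) = 2⁻¹ * ε n := by
      intro n; rw [hεdef]; simp only []; rw [pow_succ]; ring
    choose k ys hcov using fun n => hnet (ε n) (hεpos n)
    have hQ : ∀ (n : ℕ) (p : ↥(LipImage f)), ∃ (j : Fin (k n)) (z : Z.carrier),
        ‖z‖ ≤ 1 ∧ (p : Y.carrier) = ys n j + ε n • T z := by
      intro n p
      have hmem := hcov n p.2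
      rw [Set.mem_iUnion] at hmem
      obtain ⟨j, hj⟩ := hmem
      rw [Set.mem_image] at hj
      obtain ⟨wv, hw, heq⟩ := hj
      rw [Set.mem_image] at hw
      obtain ⟨z, hz, rfl⟩ := hw
      exact ⟨j, z, by rwa [← mem_closedBall_zero_iff], heq.symm⟩
    choose κ ζ hζ hp using hQ
    have hρex : ∀ (n : ℕ) (j : Fin (k n)), ∃ q : ↥(LipImage f),
        ∀ p : ↥(LipImage f), κ n p = j → κ n q = j := by
      intro n j
      by_cases h : ∃ p : ↥(LipImage f), κ n p = j
      · exact ⟨h.choose, fun _ _ => h.choose_spec⟩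
      · exact ⟨⟨v₀, hp₀⟩, fun p hpj => absurd ⟨p, hpj⟩ h⟩
    choose ρ hρ using hρex
    have hsex : ∀ (n : ℕ) (p : ↥(LipImage f)), ∃ v : Z.carrier, ‖v‖ ≤ 2 * ε n ∧
        (p : Y.carrier) = (ρ n (κ n p) : Y.carrier) + T v := by
      intro n p
      refine ⟨ε n • (ζ n p - ζ n (ρ n (κ n p))), ?_, ?_⟩
      · rw [norm_smul, Real.norm_eq_abs, abs_of_pos (hεpos n)]
        have hle : ‖ζ n p - ζ n (ρ n (κ n p))‖ ≤ 2 :=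
          le_trans (norm_sub_le _ _) (by linarith [hζ n p, hζ n (ρ n (κ n p))])
        have := mul_le_mul_of_nonneg_left hle (le_of_lt (hεpos n))
        linarith
      · have e1 := hp n p
        have e2 := hp n (ρ n (κ n p))
        rw [hρ n (κ n p) p rfl] at e2
        rw [e1, e2, T.map_smul_of_tower, map_sub]
        module
    choose sv hs2 hs1 using hsex
    have hwex : ∀ (n : ℕ) (j : Fin (k n)) (l : Fin (k (n+1))), ∃ v : Z.carrier,
        ‖v‖ ≤ 3 * ε n ∧ ∀ p : ↥(LipImage f), κ n p = j → κ (n+1) p = l →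
          T v = (ρ (n+1) l : Y.carrier) - (ρ n j : Y.carrier) := by
      intro n j l
      by_cases h : ∃ p : ↥(LipImage f), κ n p = j ∧ κ (n+1) p = l
      · obtain ⟨q, hq1, hq2⟩ := h
        refine ⟨sv n q - sv (n+1) q, ?_, ?_⟩
        · have b1 := hs2 n q
          have b2 := hs2 (n+1) q
          have b3 := norm_sub_le (sv n q) (sv (n+1) q)
          have b4 := hεsucc n
          linarith
        · intro p _ _
          have e1 := hs1 n q
          have e2 := hs1 (n+1) q
          rw [hq1] at e1
          rw [hq2] at e2
          have f1 : T (sv n q) = (q : Y.carrier) - (ρ n j : Y.carrier) := by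
            rw [e1]; abel
          have f2 : T (sv (n+1) q) = (q : Y.carrier) - (ρ (n+1) l : Y.carrier) := by
            rw [e2]; abel
          rw [map_sub, f1, f2]; abel
      · refine ⟨0, by simpa using by positivity, fun p hp1 hp2 => absurd ⟨p, hp1, hp2⟩ h⟩
    choose w hw2 hw1 using hwex
    set g : ↥(LipImage f) → ℕ → Z.carrier := fun p n => w n (κ n p) (κ (n+1) p) with hgdef
    have hηsum : Summable (fun n => 3 * ε n) :=
      (summable_geometric_of_lt_one (by norm_num) (by norm_num)).mul_left 3
    have hgb : ∀ (p : ↥(LipImage f)) n, ‖g p n‖ ≤ 3 * ε n := fun p n => hw2 n _ _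
    have hgsum : ∀ p : ↥(LipImage f), Summable (g p) :=
      fun p => Summable.of_norm_bounded hηsum (hgb p)
    have hgT : ∀ (p : ↥(LipImage f)) (n : ℕ),
        T (g p n) = (ρ (n+1) (κ (n+1) p) : Y.carrier) - (ρ n (κ n p) : Y.carrier) :=
      fun p n => hw1 n _ _ p rfl rfl
    have hεlim : Tendsto (fun n => ((‖T‖ * 2) * ε n)) atTop (𝓝 0) := by
      have h0 : Tendsto (fun n : ℕ => (2⁻¹:ℝ) ^ n) atTop (𝓝 0) :=
        tendsto_pow_atTop_nhds_zero_of_lt_one (by norm_num) (by norm_num)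
      have h1 := h0.const_mul (‖T‖ * 2)
      rw [mul_zero] at h1
      exact h1
    have hctend : ∀ p : ↥(LipImage f),
        Tendsto (fun n => ((ρ n (κ n p) : Y.carrier))) atTop (𝓝 (p : Y.carrier)) := by
      intro p
      rw [tendsto_iff_norm_sub_tendsto_zero]
      apply squeeze_zero (g := fun n => (‖T‖ * 2) * ε n) (fun n => norm_nonneg _) _ hεlim
      intro n
      have hd : (ρ n (κ n p) : Y.carrier) - (p : Y.carrier) = -(T (sv n p)) := by
        rw [hs1 n p]; abel
      rw [hd, norm_neg]
      calc ‖T (sv n p)‖ ≤ ‖T‖ * ‖sv n p‖ := T.le_opNorm _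
      _ ≤ ‖T‖ * (2 * ε n) :=
          mul_le_mul_of_nonneg_left (hs2 n p) (norm_nonneg _)
      _ = (‖T‖ * 2) * ε n := by ring
    have hkey : ∀ p : ↥(LipImage f),
        (p : Y.carrier) = (ρ 0 (κ 0 p) : Y.carrier) + T (∑' n, g p n) := by
      intro p
      have h1 : HasSum (fun n => T (g p n)) (T (∑' n, g p n)) :=
        (hgsum p).hasSum.mapL T
      have hsn : Summable fun n => ‖T (g p n)‖ := by
        apply Summable.of_nonneg_of_le (fun n => norm_nonneg _)
          (fun n => ?_) (hηsum.mul_left ‖T‖)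
        calc ‖T (g p n)‖ ≤ ‖T‖ * ‖g p n‖ := T.le_opNorm _
        _ ≤ ‖T‖ * (3 * ε n) := mul_le_mul_of_nonneg_left (hgb p n) (norm_nonneg _)
      have hps : ∀ N, ∑ i ∈ Finset.range N, T (g p i)
          = (ρ N (κ N p) : Y.carrier) - (ρ 0 (κ 0 p) : Y.carrier) := by
        intro N
        induction N with
        | zero => simp
        | succ n ih => rw [Finset.sum_range_succ, ih, hgT]; abel
      have h2 : Tendsto (fun N => ∑ i ∈ Finset.range N, T (g p i)) atTop
          (𝓝 ((p : Y.carrier) - (ρ 0 (κ 0 p) : Y.carrier))) := by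
        have := (hctend p).sub_const ((ρ 0 (κ 0 p) : Y.carrier))
        convert this using 2 with N
        · exact hps N
      have h3 : HasSum (fun n => T (g p n))
          ((p : Y.carrier) - (ρ 0 (κ 0 p) : Y.carrier)) :=
        (hasSum_iff_tendsto_nat_of_summable_norm hsn).mpr h2
      have h4 := h1.unique h3
      rw [h4]; abel
    -- the compact set C₀
    set Hset : ℕ → Set Z.carrier :=
      fun n => Set.range (fun jl : Fin (k n) × Fin (k (n+1)) => w n jl.1 jl.2) with hHdef
    have hSc : IsCompact (Set.pi Set.univ Hset) :=
      isCompact_univ_pi (fun n => (Set.finite_range _).isCompact)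
    haveI hcs : CompactSpace ↥(Set.pi Set.univ Hset) := isCompact_iff_compactSpace.mp hSc
    have hcont : Continuous
        (fun gs : ↥(Set.pi Set.univ Hset) => ∑' n, (gs : ℕ → Z.carrier) n) := by
      apply continuous_tsum (u := fun n => 3 * ε n)
      · intro n; exact (continuous_apply n).comp continuous_subtype_val
      · exact hηsum
      · intro n gs
        obtain ⟨jl, hjl⟩ := gs.2 n (Set.mem_univ n)
        rw [← hjl]; exact hw2 n jl.1 jl.2
    set C₀ : Set Z.carrier :=
      Set.range (fun gs : ↥(Set.pi Set.univ Hset) => ∑' n, (gs : ℕ → Z.carrier) n) with hC₀def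
    have hC₀c : IsCompact C₀ := isCompact_range hcont
    have hzC₀ : ∀ p : ↥(LipImage f), (∑' n, g p n) ∈ C₀ := by
      intro p
      exact ⟨⟨g p, fun n _ => ⟨(κ n p, κ (n+1) p), rfl⟩⟩, rfl⟩
    -- clopen argument
    set p₀ : ↥(LipImage f) := ⟨v₀, hp₀⟩ with hp₀def
    set e₀ : Y.carrier := (ρ 0 (κ 0 p₀) : Y.carrier) with he₀
    set G : Set (Fin (k 0)) := {j | ∃ ξv : Z.carrier, T ξv = (ρ 0 j : Y.carrier) - e₀}
      with hGdef
    set D : Fin (k 0) → Set Y.carrier :=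
      fun j => (fun zz => (ρ 0 j : Y.carrier) + T zz) '' C₀ with hDdef
    have hDc : ∀ j, IsClosed (D j) :=
      fun j => (hC₀c.image (continuous_const.add T.continuous)).isClosed
    have hDmem : ∀ p : ↥(LipImage f), (p : Y.carrier) ∈ D (κ 0 p) :=
      fun p => ⟨∑' n, g p n, hzC₀ p, (hkey p).symm⟩
    set Aset := ⋃ j ∈ G, D j with hAdef
    set Bset := ⋃ j ∈ Gᶜ, D j with hBdef
    have hAB : ∀ y, y ∈ Aset → y ∈ Bset → False := by
      intro y hyA hyB
      rw [hAdef, Set.mem_iUnion₂] at hyA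
      rw [hBdef, Set.mem_iUnion₂] at hyB
      obtain ⟨j, hjG, zz, hzz, hyj⟩ := hyA
      obtain ⟨j', hj'G, zz', hzz', hyj'⟩ := hyB
      apply hj'G
      obtain ⟨ξv, hξv⟩ := hjG
      refine ⟨ξv + zz - zz', ?_⟩
      have b1 : (ρ 0 j : Y.carrier) + T zz = y := hyj
      have b2 : (ρ 0 j' : Y.carrier) + T zz' = y := hyj'
      have hyy : (ρ 0 j : Y.carrier) + T zz = (ρ 0 j' : Y.carrier) + T zz' :=
        b1.trans b2.symm
      have h4 : (ρ 0 j' : Y.carrier) = (ρ 0 j : Y.carrier) + T zz - T zz' := by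
        rw [eq_sub_iff_add_eq]; exact hyy.symm
      rw [map_sub, map_add, hξv, h4]; abel
    have hclosedA : IsClosed Aset :=
      Set.Finite.isClosed_biUnion (Set.toFinite G) (fun j _ => hDc j)
    have hclosedB : IsClosed Bset :=
      Set.Finite.isClosed_biUnion (Set.toFinite Gᶜ) (fun j _ => hDc j)
    have hcovAB : ∀ y (hy : y ∈ LipImage f), y ∈ Aset ∪ Bset := by
      intro y hy
      by_cases hj : κ 0 ⟨y, hy⟩ ∈ G
      · exact Or.inl (Set.mem_biUnion hj (hDmem ⟨y, hy⟩))
      · exact Or.inr (Set.mem_biUnion hj (hDmem ⟨y, hy⟩))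
    have hp₀G : κ 0 p₀ ∈ G := by
      refine ⟨0, ?_⟩
      rw [map_zero, he₀, sub_self]
    have hp₀A : v₀ ∈ Aset := Set.mem_biUnion hp₀G (hDmem p₀)
    -- preconnectedness of LipImage f
    have hΨeq : LipImage f
        = (fun q : X × X => ‖q.1 - q.2‖⁻¹ • (f q.1 - f q.2)) '' Pset X := by
      ext v
      constructor
      · rintro ⟨x, hx, y, hy, hne, rfl⟩; exact ⟨(x, y), ⟨hx, hy, hne⟩, rfl⟩
      · rintro ⟨⟨x, y⟩, ⟨hx, hy, hne⟩, rfl⟩; exact ⟨x, hx, y, hy, hne, rfl⟩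
    have hKpre : IsPreconnected (LipImage f) := by
      rw [hΨeq]
      apply IsPreconnected.image (Pset_pre xb yb hxb hyb hxyb)
      have hfc : ContinuousOn f (ball (0:X) 1) := hf.2.1.continuousOn
      refine ContinuousOn.smul (f := fun q : X × X => ‖q.1 - q.2‖⁻¹) ?_ ?_
      · apply ContinuousOn.inv₀
        · exact ((continuous_fst.sub continuous_snd).norm).continuousOn
        · rintro ⟨x, y⟩ ⟨_, _, hne⟩
          exact norm_ne_zero_iff.mpr (sub_ne_zero.mpr hne)
      · exact (hfc.comp continuous_fst.continuousOn (fun q hq => hq.1)).sub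
          (hfc.comp continuous_snd.continuousOn (fun q hq => hq.2.1))
    have hKA : LipImage f ⊆ Aset := by
      by_contra hnot
      obtain ⟨y1, hy1K, hy1A⟩ := Set.not_subset.mp hnot
      have htrip := hKpre Bsetᶜ Asetᶜ hclosedB.isOpen_compl hclosedA.isOpen_compl
        (by
          intro y hy
          by_cases hyB : y ∈ Bset
          · exact Or.inr (fun hyA => hAB y hyA hyB)
          · exact Or.inl hyB)
        ⟨v₀, hp₀, fun hB => hAB v₀ hp₀A hB⟩
        ⟨y1, hy1K, hy1A⟩
      obtain ⟨y2, hy2K, hy2B, hy2A⟩ := htrip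
      rcases hcovAB y2 hy2K with h | h
      · exact hy2A h
      · exact hy2B h
    -- collect the translated compact set
    have hξex : ∀ j : Fin (k 0), ∃ ξv : Z.carrier,
        j ∈ G → T ξv = (ρ 0 j : Y.carrier) - e₀ := by
      intro j
      by_cases hj : j ∈ G
      · obtain ⟨v, hv⟩ := hj; exact ⟨v, fun _ => hv⟩
      · exact ⟨0, fun h => absurd h hj⟩
    choose ξ hξ using hξex
    set C₁ : Set Z.carrier := ⋃ j ∈ G, (fun zz => ξ j + zz) '' C₀ with hC₁def
    have hC₁c : IsCompact C₁ :=
      Set.Finite.isCompact_biUnion (Set.toFinite G)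
        (fun j _ => hC₀c.image (continuous_const.add continuous_id))
    have hKC₁ : ∀ y ∈ LipImage f, ∃ cc ∈ C₁, y = e₀ + T cc := by
      intro y hy
      have hyA := hKA hy
      rw [hAdef, Set.mem_iUnion₂] at hyA
      obtain ⟨j, hjG, zz, hzz, hyj⟩ := hyA
      have b1 : (ρ 0 j : Y.carrier) + T zz = y := hyj
      refine ⟨ξ j + zz, Set.mem_biUnion hjG ⟨zz, hzz, rfl⟩, ?_⟩
      rw [map_add, hξ j hjG, ← b1]; abel
    have hvneg : -v₀ ∈ LipImage f := by
      refine ⟨yb, hyb, xb, hxb, hxyb.symm, ?_⟩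
      rw [hveq, norm_sub_rev]
      module
    obtain ⟨a1, ha1C, ha1⟩ := hKC₁ v₀ hp₀
    obtain ⟨a2, ha2C, ha2⟩ := hKC₁ (-v₀) hvneg
    have he₀T : e₀ = T (-((2:ℝ)⁻¹) • (a1 + a2)) := by
      have h1 : T a1 = v₀ - e₀ := by rw [ha1]; abel
      have h2 : T a2 = -v₀ - e₀ := by rw [ha2]; abel
      have h3 : (2:ℝ) • e₀ = -(T a1 + T a2) := by
        rw [h1, h2, two_smul]; abel
      rw [T.map_smul_of_tower, map_add]
      calc e₀ = (2:ℝ)⁻¹ • ((2:ℝ) • e₀) := by rw [smul_smul]; norm_num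
      _ = (2:ℝ)⁻¹ • -(T a1 + T a2) := by rw [h3]
      _ = -((2:ℝ)⁻¹) • (T a1 + T a2) := by rw [smul_neg, neg_smul]
    refine ⟨Z, T, (fun cc => -((2:ℝ)⁻¹) • (a1 + a2) + cc) '' C₁, hT, ?_, ?_⟩
    · have hMc : IsCompact ((fun cc => -((2:ℝ)⁻¹) • (a1 + a2) + cc) '' C₁) :=
        hC₁c.image (continuous_const.add continuous_id)
      rw [hMc.isClosed.closure_eq]
      exact hMc
    · intro y hy
      obtain ⟨cc, hccC, hyeq⟩ := hKC₁ y hy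
      refine ⟨-((2:ℝ)⁻¹) • (a1 + a2) + cc, ⟨cc, hccC, rfl⟩, ?_⟩
      rw [map_add, ← he₀T]
      exact hyeq.symm
end
end

section
/- Let A be a Banach operator ideal and f ∈ HL₀(B_X, Y). Then Im_L(f) is relatively A-compact if and only if there exist an operator T ∈ A(ℓ₁, Y) and a relatively compact set K contained in the closed unit ball of ℓ₁ with Im_L(f) ⊆ T(K). -/
open Metric Set Filter Topology

noncomputable section

universe u

instance : Fact ((1 : ENNReal) ≤ 1) := ⟨le_rfl⟩

/-- The complex Banach space ℓ₁. -/
def ell1 : BanachSp.{0} := ⟨lp (fun _ : ℕ => ℂ) 1⟩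

namespace Aux8
abbrev L1 := lp (fun _ : ℕ => ℂ) 1

lemma L1norm (a : L1) : ‖a‖ = ∑' n, ‖a n‖ := by
  have := lp.norm_eq_tsum_rpow (p := 1) (by norm_num) a
  simpa using this

lemma L1summable (a : L1) : Summable fun n => ‖a n‖ := by
  have := lp.memℓp a
  have h := Memℓp.summable (p := 1) (by norm_num) this
  simpa using h

def αs (k : ℕ) : ℝ := 2⁻¹ ^ (k + 1)

lemma αs_pos (k : ℕ) : 0 < αs k := pow_pos (by norm_num) _

lemma αs_summable : Summable αs := by
  have : Summable (fun k : ℕ => (2⁻¹ : ℝ) ^ k) :=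
    summable_geometric_of_lt_one (by norm_num) (by norm_num)
  have h := this.mul_left 2⁻¹
  apply h.congr
  intro k
  simp [αs, pow_succ, mul_comm]

lemma αs_tsum : ∑' k, αs k = 1 := by
  have h : ∑' k : ℕ, (2⁻¹ : ℝ) ^ k = 2 := by
    rw [tsum_geometric_of_lt_one (by norm_num) (by norm_num)]; norm_num
  calc ∑' k, αs k = ∑' k : ℕ, 2⁻¹ * 2⁻¹ ^ k := by
        apply tsum_congr; intro k; simp [αs, pow_succ, mul_comm]
    _ = 2⁻¹ * 2 := by rw [tsum_mul_left, h]
    _ = 1 := by norm_num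

lemma αs_tail (κ : ℕ) : ∑' k, αs (k + κ) = 2⁻¹ ^ κ := by
  calc ∑' k, αs (k + κ) = ∑' k : ℕ, 2⁻¹ ^ κ * αs k := by
        apply tsum_congr; intro k; simp [αs, pow_add, pow_succ]; ring
    _ = 2⁻¹ ^ κ * 1 := by rw [tsum_mul_left, αs_tsum]
    _ = 2⁻¹ ^ κ := by ring

def enc : ℕ ≃ ℕ × ℕ × ℕ := (Denumerable.eqv _).symm

def qf (ν : ℕ → ℕ) : ℕ → ℕ × ℕ × ℕ
  | 0 => (0, ν 0, 0)
  | (k+1) => (k+1, ν (k+1), ν k)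

lemma qf_fst (ν : ℕ → ℕ) (k : ℕ) : (qf ν k).1 = k := by cases k <;> rfl

lemma qf_congr {ν ν' : ℕ → ℕ} {k : ℕ} (h : ∀ j ≤ k, ν j = ν' j) : qf ν k = qf ν' k := by
  cases k with
  | zero => simp [qf, h 0 (le_refl 0)]
  | succ k => simp [qf, h k (Nat.le_succ k), h (k+1) (le_refl _)]

variable {W : Type} [NormedAddCommGroup W] [NormedSpace ℂ W] [CompleteSpace W]

def gv (u : ℕ → W) (R : ℝ) : ℕ × ℕ × ℕ → W
  | (0, i, _) => if ‖u i‖ ≤ R then u i else 0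
  | (k+1, i, j) => if ‖u i - u j‖ ≤ 2 * 2⁻¹ ^ k then u i - u j else 0

lemma norm_gv (u : ℕ → W) (R : ℝ) (q : ℕ × ℕ × ℕ) :
    ‖gv u R q‖ ≤ αs q.1 * max (2 * R) 8 := by
  obtain ⟨k, i, j⟩ := q
  have h8 : (0:ℝ) ≤ max (2*R) 8 := le_trans (by norm_num) (le_max_right _ _)
  cases k with
  | zero =>
    simp only [gv]
    split_ifs with h
    · have : αs 0 = 2⁻¹ := by simp [αs]
      rw [this]
      calc ‖u i‖ ≤ R := h
        _ = 2⁻¹ * (2 * R) := by ring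
        _ ≤ 2⁻¹ * max (2*R) 8 := by
            have := le_max_left (2*R) 8; nlinarith
    · simpa using mul_nonneg (αs_pos 0).le h8
  | succ k =>
    simp only [gv]
    split_ifs with h
    · calc ‖u i - u j‖ ≤ 2 * 2⁻¹ ^ k := h
        _ = αs (k+1) * 8 := by simp [αs]; ring
        _ ≤ αs (k+1) * max (2*R) 8 := by
            have := le_max_right (2*R) 8
            exact mul_le_mul_of_nonneg_left this (αs_pos _).le
    · simpa using mul_nonneg (αs_pos (k+1)).le h8

def wv (u : ℕ → W) (R : ℝ) (n : ℕ) : W :=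
  ((αs (enc n).1 : ℂ))⁻¹ • gv u R (enc n)

lemma norm_wv (u : ℕ → W) (R : ℝ) (n : ℕ) : ‖wv u R n‖ ≤ max (2 * R) 8 := by
  have hpos := αs_pos (enc n).1
  have : ‖wv u R n‖ = (αs (enc n).1)⁻¹ * ‖gv u R (enc n)‖ := by
    rw [wv, norm_smul]
    congr 1
    rw [norm_inv, Complex.norm_real]
    simp [abs_of_pos hpos]
  rw [this]
  rw [inv_mul_le_iff₀ hpos]
  exact norm_gv u R (enc n)

lemma Ssummable (u : ℕ → W) (R : ℝ) (a : L1) :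
    Summable fun n => a n • wv u R n := by
  apply Summable.of_norm
  apply Summable.of_nonneg_of_le (fun n => norm_nonneg _)
    (fun n => ?_) ((L1summable a).mul_right (max (2*R) 8))
  rw [norm_smul]
  exact mul_le_mul_of_nonneg_left (norm_wv u R n) (norm_nonneg _)

def Slin (u : ℕ → W) (R : ℝ) : L1 →ₗ[ℂ] W where
  toFun a := ∑' n, a n • wv u R n
  map_add' a b := by
    have : ∀ n, ((a + b) : L1) n • wv u R n = a n • wv u R n + b n • wv u R n := by
      intro n
      rw [lp.coeFn_add]
      simp [add_smul]
    dsimp only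
    rw [tsum_congr this, Summable.tsum_add (Ssummable u R a) (Ssummable u R b)]
  map_smul' c a := by
    have : ∀ n, ((c • a) : L1) n • wv u R n = c • (a n • wv u R n) := by
      intro n
      rw [lp.coeFn_smul]
      simp [smul_smul]
    dsimp only
    rw [tsum_congr this, Summable.tsum_const_smul c (Ssummable u R a)]
    rfl

lemma Slin_bound (u : ℕ → W) (R : ℝ) (a : L1) :
    ‖Slin u R a‖ ≤ max (2 * R) 8 * ‖a‖ := by
  have h1 : ‖Slin u R a‖ ≤ ∑' n, ‖a n • wv u R n‖ := by
    apply norm_tsum_le_tsum_norm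
    apply Summable.of_nonneg_of_le (fun n => norm_nonneg _)
      (fun n => ?_) ((L1summable a).mul_right (max (2*R) 8))
    rw [norm_smul]
    exact mul_le_mul_of_nonneg_left (norm_wv u R n) (norm_nonneg _)
  refine h1.trans ?_
  have h2 : ∑' n, ‖a n • wv u R n‖ ≤ ∑' n, ‖a n‖ * max (2*R) 8 := by
    apply Summable.tsum_le_tsum _ _ ((L1summable a).mul_right _)
    · intro n
      rw [norm_smul]
      exact mul_le_mul_of_nonneg_left (norm_wv u R n) (norm_nonneg _)
    · apply Summable.of_nonneg_of_le (fun n => norm_nonneg _)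
        (fun n => ?_) ((L1summable a).mul_right (max (2*R) 8))
      rw [norm_smul]
      exact mul_le_mul_of_nonneg_left (norm_wv u R n) (norm_nonneg _)
  refine h2.trans ?_
  rw [tsum_mul_right, L1norm a, mul_comm]

def Sop (u : ℕ → W) (R : ℝ) : L1 →L[ℂ] W :=
  (Slin u R).mkContinuous (max (2*R) 8) (Slin_bound u R)

lemma Sop_apply (u : ℕ → W) (R : ℝ) (a : L1) : Sop u R a = ∑' n, a n • wv u R n := by
  rw [Sop, LinearMap.mkContinuous_apply]; rfl

lemma Sop_single (u : ℕ → W) (R : ℝ) (j : ℕ) :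
    Sop u R (lp.single 1 j (1:ℂ)) = wv u R j := by
  rw [Sop_apply]
  rw [tsum_eq_single j]
  · rw [lp.single_apply_self, one_smul]
  · intro n hn
    rw [lp.single_apply_ne 1 j _ hn, zero_smul]

def sing (j : ℕ) : L1 := lp.single 1 j (1:ℂ)

lemma norm_sing (j : ℕ) : ‖sing j‖ = 1 := by
  have := lp.norm_single (p := 1) (E := fun _ : ℕ => ℂ) (by norm_num) j (1:ℂ)
  simpa [sing] using this

lemma Sop_sing (u : ℕ → W) (R : ℝ) (j : ℕ) : Sop u R (sing j) = wv u R j :=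
  Sop_single u R j


def extf (κ : ℕ) (v : Fin κ → ℕ) (j : ℕ) : ℕ := if h : j < κ then v ⟨j, h⟩ else 0

def Gf (κ : ℕ) (v : Fin κ → ℕ) : L1 :=
  ∑ k ∈ Finset.range κ, (αs k : ℂ) • sing (enc.symm (qf (extf κ v) k))


set_option maxHeartbeats 1000000 in
theorem exists_ell1_factor {W : Type} [NormedAddCommGroup W] [NormedSpace ℂ W]
    [CompleteSpace W] (M : Set W) (hM : IsCompact (closure M)) :
    ∃ (S : L1 →L[ℂ] W) (K : Set L1),
      K ⊆ closedBall 0 1 ∧ IsCompact (closure K) ∧ M ⊆ S '' K := by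
  classical
  rcases M.eq_empty_or_nonempty with rfl | ⟨m₀, hm₀⟩
  · refine ⟨0, ∅, empty_subset _, ?_, by simp⟩
    rw [closure_empty]; exact isCompact_empty
  set C := closure M with hCdef
  have hCc : IsCompact C := hM
  have hMC : M ⊆ C := subset_closure
  have hCne : C.Nonempty := ⟨m₀, hMC hm₀⟩
  obtain ⟨c, hcc, hsub⟩ := hCc.isSeparable
  have hcne : c.Nonempty := by
    rcases c.eq_empty_or_nonempty with rfl | h
    · simpa using hsub hCne.choose_spec
    · exact h
  obtain ⟨u, rfl⟩ := hcc.exists_eq_range hcne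
  have hdense : ∀ m ∈ C, ∀ k : ℕ, ∃ i, ‖m - u i‖ < 2⁻¹ ^ k := by
    intro m hm k
    have hmc : m ∈ closure (range u) := hsub hm
    rw [Metric.mem_closure_iff] at hmc
    obtain ⟨b, hb, hd⟩ := hmc (2⁻¹ ^ k) (pow_pos (by norm_num) k)
    obtain ⟨i, rfl⟩ := hb
    exact ⟨i, by rwa [dist_eq_norm] at hd⟩
  set nf : ℕ → W → ℕ := fun k m => if h : m ∈ C then Nat.find (hdense m h k) else 0
    with hnfdef
  have hnf : ∀ k, ∀ m ∈ C, ‖m - u (nf k m)‖ < 2⁻¹ ^ k := by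
    intro k m hm
    simp only [hnfdef, dif_pos hm]
    exact Nat.find_spec (hdense m hm k)
  have hnfmin : ∀ k, ∀ m ∈ C, ∀ i, ‖m - u i‖ < 2⁻¹ ^ k → nf k m ≤ i := by
    intro k m hm i hi
    simp only [hnfdef, dif_pos hm]
    exact Nat.find_min' _ hi
  obtain ⟨r, hr⟩ := hCc.isBounded.subset_closedBall 0
  have hnormC : ∀ m ∈ C, ‖m‖ ≤ r := fun m hm => by
    simpa [mem_closedBall, dist_zero_right] using hr hm
  set R : ℝ := r + 1 with hRdef
  set pf : ℕ → W → W := fun k m => u (nf k m) with hpfdef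
  set tf : ℕ → W → W := fun k m => pf k m - (if k = 0 then 0 else pf (k-1) m) with htfdef
  have hpartial : ∀ (m : W) (K : ℕ), ∑ k ∈ Finset.range (K+1), tf k m = pf K m := by
    intro m K
    induction K with
    | zero => simp [htfdef]
    | succ K ih =>
      rw [Finset.sum_range_succ, ih]
      simp [htfdef]
  have hgt : ∀ m ∈ C, ∀ k, gv u R (qf (fun j => nf j m) k) = tf k m := by
    intro m hm k
    cases k with
    | zero =>
      have hcond : ‖u (nf 0 m)‖ ≤ R := by
        have h1 : ‖m - u (nf 0 m)‖ < 2⁻¹ ^ 0 := hnf 0 m hm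
        have h2 : ‖u (nf 0 m)‖ ≤ ‖m‖ + ‖m - u (nf 0 m)‖ := by
          have := norm_sub_norm_le m (u (nf 0 m))
          have h3 := norm_add_le (u (nf 0 m)) (m - u (nf 0 m))
          calc ‖u (nf 0 m)‖ = ‖m - (m - u (nf 0 m))‖ := by rw [sub_sub_cancel]
            _ ≤ ‖m‖ + ‖m - u (nf 0 m)‖ := norm_sub_le _ _
        have := hnormC m hm
        simp only [pow_zero] at h1
        linarith [h2, h1, this]
      simp [qf, gv, hcond, htfdef, hpfdef]
    | succ k =>
      have hcond : ‖u (nf (k+1) m) - u (nf k m)‖ ≤ 2 * 2⁻¹ ^ k := by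
        have h1 := hnf (k+1) m hm
        have h2 := hnf k m hm
        have h3 : ‖u (nf (k+1) m) - u (nf k m)‖ ≤
            ‖m - u (nf (k+1) m)‖ + ‖m - u (nf k m)‖ := by
          calc ‖u (nf (k+1) m) - u (nf k m)‖
              = ‖(m - u (nf k m)) - (m - u (nf (k+1) m))‖ := by congr 1; abel
            _ ≤ ‖m - u (nf k m)‖ + ‖m - u (nf (k+1) m)‖ := norm_sub_le _ _
            _ = ‖m - u (nf (k+1) m)‖ + ‖m - u (nf k m)‖ := by ring
        have h4 : (2⁻¹:ℝ) ^ (k+1) ≤ 2⁻¹ ^ k :=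
          pow_le_pow_of_le_one (by norm_num) (by norm_num) (Nat.le_succ k)
        calc ‖u (nf (k+1) m) - u (nf k m)‖
            ≤ ‖m - u (nf (k+1) m)‖ + ‖m - u (nf k m)‖ := h3
          _ ≤ 2⁻¹ ^ (k+1) + 2⁻¹ ^ k := by linarith [h1, h2]
          _ ≤ 2⁻¹ ^ k + 2⁻¹ ^ k := by linarith [h4]
          _ = 2 * 2⁻¹ ^ k := by ring
      simp only [qf, gv]
      rw [if_pos hcond]
      simp [htfdef, hpfdef]
  set idx : W → ℕ → ℕ := fun m k => enc.symm (qf (fun j => nf j m) k) with hidxdef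
  have hαne : ∀ k, ((αs k : ℂ)) ≠ 0 := fun k => by
    exact_mod_cast (αs_pos k).ne'
  have hwidx : ∀ m ∈ C, ∀ k, (αs k : ℂ) • wv u R (idx m k) = tf k m := by
    intro m hm k
    rw [hidxdef]
    simp only [wv, Equiv.apply_symm_apply, qf_fst]
    rw [smul_inv_smul₀ (hαne k)]
    exact hgt m hm k
  have hsum_av : ∀ m : W, Summable (fun k => (αs k : ℂ) • sing (idx m k)) := by
    intro m
    apply Summable.of_norm
    apply Summable.of_nonneg_of_le (fun k => norm_nonneg _) (fun k => ?_) αs_summable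
    rw [norm_smul, norm_sing, mul_one, Complex.norm_real, Real.norm_of_nonneg (αs_pos k).le]
  set av : W → L1 := fun m => ∑' k, (αs k : ℂ) • sing (idx m k) with havdef
  have hsum_av_norm : ∀ m : W, Summable (fun k => ‖(αs k : ℂ) • sing (idx m k)‖) := by
    intro m
    apply Summable.of_nonneg_of_le (fun k => norm_nonneg _) (fun k => ?_) αs_summable
    rw [norm_smul, norm_sing, mul_one, Complex.norm_real, Real.norm_of_nonneg (αs_pos k).le]
  have hav_norm : ∀ m : W, ‖av m‖ ≤ 1 := by
    intro m
    rw [havdef]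
    refine le_trans (norm_tsum_le_tsum_norm (hsum_av_norm m)) ?_
    have : ∀ k, ‖(αs k : ℂ) • sing (idx m k)‖ = αs k := by
      intro k
      rw [norm_smul, norm_sing, mul_one, Complex.norm_real]
      exact Real.norm_of_nonneg (αs_pos k).le
    rw [tsum_congr this, αs_tsum]
  have hsum_tf : ∀ m ∈ C, Summable (fun k => tf k m) := by
    intro m hm
    apply Summable.of_norm
    apply Summable.of_nonneg_of_le (fun k => norm_nonneg _) (fun k => ?_)
      (αs_summable.mul_right (max (2*R) 8))
    rw [← hwidx m hm k, norm_smul, Complex.norm_real, Real.norm_of_nonneg (αs_pos k).le]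
    exact mul_le_mul_of_nonneg_left (norm_wv u R _) (αs_pos k).le
  have hSav : ∀ m ∈ C, Sop u R (av m) = m := by
    intro m hm
    rw [havdef]
    rw [ContinuousLinearMap.map_tsum _ (hsum_av m)]
    have h1 : ∀ k, Sop u R ((αs k : ℂ) • sing (idx m k)) = tf k m := by
      intro k
      rw [map_smul, Sop_sing]
      exact hwidx m hm k
    rw [tsum_congr h1]
    -- now ∑' k, tf k m = m
    have hs := hsum_tf m hm
    have h2 := hs.hasSum.tendsto_sum_nat
    have h3 : Tendsto (fun K => ∑ k ∈ Finset.range (K+1), tf k m) atTop (𝓝 (∑' k, tf k m)) :=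
      h2.comp (tendsto_add_atTop_nat 1)
    have h4 : Tendsto (fun K => pf K m) atTop (𝓝 (∑' k, tf k m)) := by
      simpa only [hpartial m] using h3
    have h5 : Tendsto (fun K => pf K m) atTop (𝓝 m) := by
      rw [tendsto_iff_dist_tendsto_zero]
      apply squeeze_zero (fun K => dist_nonneg) (fun K => ?_)
        (tendsto_pow_atTop_nhds_zero_of_lt_one (by norm_num) (by norm_num : (2⁻¹:ℝ) < 1))
      rw [dist_comm, dist_eq_norm]
      exact (hnf K m hm).le
    exact tendsto_nhds_unique h4 h5
  -- totally bounded
  have hTB : TotallyBounded (av '' C) := by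
    rw [Metric.totallyBounded_iff]
    intro ε hε
    obtain ⟨κ, hκ⟩ := exists_pow_lt_of_lt_one hε (by norm_num : (2⁻¹:ℝ) < 1)
    have hNk : ∀ k : ℕ, ∃ N, ∀ m ∈ C, nf k m ≤ N := by
      intro k
      have hopen : ∀ i : ℕ, IsOpen {x : W | ‖x - u i‖ < 2⁻¹ ^ k} :=
        fun i => isOpen_lt ((continuous_id.sub continuous_const).norm) continuous_const
      have hcov : C ⊆ ⋃ i : ℕ, {x : W | ‖x - u i‖ < 2⁻¹ ^ k} :=
        fun m hm => mem_iUnion.2 (hdense m hm k)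
      obtain ⟨s, hs⟩ := hCc.elim_finite_subcover _ hopen hcov
      refine ⟨s.sup id, fun m hm => ?_⟩
      obtain ⟨i, his, hi⟩ := mem_iUnion₂.1 (hs hm)
      exact le_trans (hnfmin k m hm i hi) (Finset.le_sup (f := id) his)
    choose N hN using hNk
    have hBfin : {v : Fin κ → ℕ | ∀ k : Fin κ, v k ∈ Set.Iic (N k.1)}.Finite :=
      Set.Finite.pi' (fun i : Fin κ => Set.finite_Iic (N i.1))
    refine ⟨Gf κ '' {v : Fin κ → ℕ | ∀ k : Fin κ, v k ∈ Set.Iic (N k.1)}, hBfin.image _, ?_⟩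
    rintro _ ⟨m, hm, rfl⟩
    have hvB : (fun k : Fin κ => nf k.1 m) ∈ {v : Fin κ → ℕ | ∀ k : Fin κ, v k ∈ Set.Iic (N k.1)} :=
      fun k => hN k.1 m hm
    refine mem_iUnion₂.2 ⟨Gf κ (fun k : Fin κ => nf k.1 m), mem_image_of_mem _ hvB, ?_⟩
    rw [mem_ball, dist_eq_norm]
    have hGval : Gf κ (fun k : Fin κ => nf k.1 m) =
        ∑ k ∈ Finset.range κ, (αs k : ℂ) • sing (idx m k) := by
      rw [Gf]
      apply Finset.sum_congr rfl
      intro k hk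
      rw [Finset.mem_range] at hk
      congr 2
      rw [hidxdef]
      congr 1
      apply qf_congr
      intro j hj
      have hjκ : j < κ := lt_of_le_of_lt hj hk
      simp [extf, hjκ]
    rw [hGval]
    have htail := Summable.sum_add_tsum_nat_add κ (hsum_av m)
    have hdiff : av m - ∑ k ∈ Finset.range κ, (αs k : ℂ) • sing (idx m k) =
        ∑' k, (αs (k + κ) : ℂ) • sing (idx m (k + κ)) := by
      rw [havdef]
      dsimp only
      rw [← htail]
      abel
    rw [hdiff]
    have hsum_tail : Summable (fun k => ‖(αs (k+κ) : ℂ) • sing (idx m (k+κ))‖) := by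
      apply Summable.of_nonneg_of_le (fun k => norm_nonneg _) (fun k => ?_)
        ((summable_nat_add_iff κ).2 αs_summable)
      rw [norm_smul, norm_sing, mul_one, Complex.norm_real, Real.norm_of_nonneg (αs_pos _).le]
    refine lt_of_le_of_lt (le_trans (norm_tsum_le_tsum_norm hsum_tail) ?_) hκ
    have heq : ∀ k, ‖(αs (k+κ) : ℂ) • sing (idx m (k+κ))‖ = αs (k+κ) := by
      intro k
      rw [norm_smul, norm_sing, mul_one, Complex.norm_real]
      exact Real.norm_of_nonneg (αs_pos _).le
    rw [tsum_congr heq, αs_tail]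
  refine ⟨Sop u R, av '' C, ?_, ?_, ?_⟩
  · rintro _ ⟨m, _, rfl⟩
    rw [mem_closedBall, dist_zero_right]
    exact hav_norm m
  · exact TotallyBounded.isCompact_of_isClosed hTB.closure isClosed_closure
  · intro m hm
    exact ⟨av m, mem_image_of_mem _ (hMC hm), hSav m (hMC hm)⟩

end Aux8

/-- the Lipschitz image Im_L(f) of f ∈ HL₀(B_X, Y) is relatively
𝒜-compact iff there are an operator T ∈ 𝒜(ℓ₁, Y) and a relatively compact set K
contained in the closed unit ball of ℓ₁ with Im_L(f) ⊆ T(K). -/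
theorem aCompact_iff_ell1_factorization {X : Type}
    [NormedAddCommGroup X] [NormedSpace ℂ X] [CompleteSpace X]
    (A : ∀ W Z : BanachSp.{0}, Set (W.carrier →L[ℂ] Z.carrier))
    (hA_comp : ∀ (U W Z V : BanachSp.{0}) (S : Z.carrier →L[ℂ] V.carrier)
      (T : W.carrier →L[ℂ] Z.carrier) (R : U.carrier →L[ℂ] W.carrier),
      T ∈ A W Z → S.comp (T.comp R) ∈ A U V)
    (hA_rank1 : ∀ (W Z : BanachSp.{0}) (φ : W.carrier →L[ℂ] ℂ) (z : Z.carrier),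
      φ.smulRight z ∈ A W Z)
    (Y : BanachSp.{0})
    (f : X → Y.carrier) (hf : MemHL f) :
    RelACompact A Y (LipImage f) ↔
      ∃ T : (lp (fun _ : ℕ => ℂ) 1) →L[ℂ] Y.carrier, T ∈ A ell1 Y ∧
        ∃ K : Set (lp (fun _ : ℕ => ℂ) 1),
          K ⊆ closedBall 0 1 ∧ IsCompact (closure K) ∧ LipImage f ⊆ T '' K := by
  constructor
  · rintro ⟨W, T, M, hT, hMc, himg⟩
    obtain ⟨S, K, hK1, hK2, hK3⟩ := Aux8.exists_ell1_factor (W := W.carrier) M hMc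
    refine ⟨(ContinuousLinearMap.id ℂ Y.carrier).comp (T.comp S),
      hA_comp ell1 W Y Y _ T S hT, K, hK1, hK2, ?_⟩
    intro v hv
    obtain ⟨m, hm, rfl⟩ := himg hv
    obtain ⟨a, ha, ham⟩ := hK3 hm
    exact ⟨a, ha, by simp [ham]⟩
  · rintro ⟨T, hT, K, hK1, hK2, hK3⟩
    exact ⟨ell1, T, K, hT, hK2, hK3⟩
end
end

section
/- Let A be an s-normed operator ideal. A map f ∈ HL₀(B_X, Y) admits a factorization f = S ∘ h with S ∈ A(Z, Y) and h ∈ HL₀(B_X, Z) for some complex Banach space Z, if and only if its linearization T_f belongs to A(G₀(B_X), Y). In that case, inf{‖S‖_A · L(h)} over all such factorizations equals ‖T_f‖_A. -/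
open Metric Set Filter Topology

noncomputable section

universe u

/-- for an s-normed operator ideal [𝒜, ‖·‖_𝒜], a holomorphic Lipschitz
map f factors as f = S ∘ h with S ∈ 𝒜(Z, Y) and h ∈ HL₀(B_X, Z) for some Banach
space Z iff its linearization T_f belongs to 𝒜(G₀(B_X), Y); and in that case
inf{‖S‖_𝒜 · L(h)} over all factorizations equals ‖T_f‖_𝒜. -/
theorem composition_ideal_iff_linearization {X : Type u}
    [NormedAddCommGroup X] [NormedSpace ℂ X] [CompleteSpace X]
    (A : ∀ W Z : BanachSp.{u}, Set (W.carrier →L[ℂ] Z.carrier))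
    (hA_comp : ∀ (U W Z V : BanachSp.{u}) (S : Z.carrier →L[ℂ] V.carrier)
      (T : W.carrier →L[ℂ] Z.carrier) (R : U.carrier →L[ℂ] W.carrier),
      T ∈ A W Z → S.comp (T.comp R) ∈ A U V)
    (hA_rank1 : ∀ (W Z : BanachSp.{u}) (φ : W.carrier →L[ℂ] ℂ) (z : Z.carrier),
      φ.smulRight z ∈ A W Z)
    (s : ℝ) (hs0 : 0 < s) (hs1 : s ≤ 1)
    (nA : ∀ W Z : BanachSp.{u}, (W.carrier →L[ℂ] Z.carrier) → ℝ)
    (hnA_nonneg : ∀ (W Z : BanachSp.{u}) (T : W.carrier →L[ℂ] Z.carrier), 0 ≤ nA W Z T)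
    (hnA_op : ∀ (W Z : BanachSp.{u}) (T : W.carrier →L[ℂ] Z.carrier), ‖T‖ ≤ nA W Z T)
    (hnA_tri : ∀ (W Z : BanachSp.{u}) (T T' : W.carrier →L[ℂ] Z.carrier),
      nA W Z (T + T') ^ s ≤ nA W Z T ^ s + nA W Z T' ^ s)
    (hnA_comp : ∀ (U W Z V : BanachSp.{u}) (S : Z.carrier →L[ℂ] V.carrier)
      (T : W.carrier →L[ℂ] Z.carrier) (R : U.carrier →L[ℂ] W.carrier),
      T ∈ A W Z → nA U V (S.comp (T.comp R)) ≤ ‖S‖ * nA W Z T * ‖R‖)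
    (G Y : BanachSp.{u})
    (δX : X → G.carrier) (hδ : MemHL δX) (hδnorm : LipNorm δX = 1)
    (hdense : Dense (Submodule.span ℂ (δX '' ball (0 : X) 1) : Set G.carrier))
    (hlin : ∀ (Z : BanachSp.{u}) (h : X → Z.carrier), MemHL h →
      ∃ T : G.carrier →L[ℂ] Z.carrier,
        (∀ x ∈ ball (0 : X) 1, T (δX x) = h x) ∧ ‖T‖ = LipNorm h)
    (f : X → Y.carrier) (hf : MemHL f)
    (Tf : G.carrier →L[ℂ] Y.carrier)
    (hTf : ∀ x ∈ ball (0 : X) 1, Tf (δX x) = f x) (hTfnorm : ‖Tf‖ = LipNorm f) :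
    ((∃ (Z : BanachSp.{u}) (S : Z.carrier →L[ℂ] Y.carrier) (h : X → Z.carrier),
        S ∈ A Z Y ∧ MemHL h ∧ ∀ x ∈ ball (0 : X) 1, f x = S (h x)) ↔
      Tf ∈ A G Y) ∧
    (Tf ∈ A G Y →
      sInf {r : ℝ | ∃ (Z : BanachSp.{u}) (S : Z.carrier →L[ℂ] Y.carrier)
          (h : X → Z.carrier), S ∈ A Z Y ∧ MemHL h ∧
          (∀ x ∈ ball (0 : X) 1, f x = S (h x)) ∧ r = nA Z Y S * LipNorm h}
        = nA G Y Tf) := by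

  -- common: from a factorization, Tf = S ∘ T_h
  have key : ∀ (Z : BanachSp.{u}) (S : Z.carrier →L[ℂ] Y.carrier) (h : X → Z.carrier),
      MemHL h → (∀ x ∈ ball (0 : X) 1, f x = S (h x)) →
      ∃ Th : G.carrier →L[ℂ] Z.carrier, Tf = S.comp Th ∧ ‖Th‖ = LipNorm h := by
    intro Z S h hh hfac
    obtain ⟨Th, hTh, hThn⟩ := hlin Z h hh
    refine ⟨Th, ?_, hThn⟩
    apply ContinuousLinearMap.ext_on hdense
    rintro _ ⟨x, hx, rfl⟩
    simp only [ContinuousLinearMap.comp_apply, hTf x hx, hTh x hx, hfac x hx]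
  have memA : (∃ (Z : BanachSp.{u}) (S : Z.carrier →L[ℂ] Y.carrier) (h : X → Z.carrier),
        S ∈ A Z Y ∧ MemHL h ∧ ∀ x ∈ ball (0 : X) 1, f x = S (h x)) → Tf ∈ A G Y := by
    rintro ⟨Z, S, h, hSA, hh, hfac⟩
    obtain ⟨Th, hTfc, -⟩ := key Z S h hh hfac
    have := hA_comp G Z Y Y (ContinuousLinearMap.id ℂ Y.carrier) S Th hSA
    simpa [← hTfc] using this
  constructor
  · constructor
    · exact memA
    · intro hTfA
      exact ⟨G, Tf, δX, hTfA, hδ, fun x hx => (hTf x hx).symm⟩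
  · intro hTfA
    apply le_antisymm
    · apply csInf_le
      · refine ⟨0, ?_⟩
        rintro r ⟨Z, S, h, hSA, hh, hfac, rfl⟩
        obtain ⟨Th, -, hThn⟩ := key Z S h hh hfac
        have : (0:ℝ) ≤ ‖Th‖ := norm_nonneg _
        exact mul_nonneg (hnA_nonneg Z Y S) (hThn ▸ this)
      · exact ⟨G, Tf, δX, hTfA, hδ, fun x hx => (hTf x hx).symm, by rw [hδnorm, mul_one]⟩
    · apply le_csInf
      · exact ⟨nA G Y Tf, G, Tf, δX, hTfA, hδ, fun x hx => (hTf x hx).symm,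
          by rw [hδnorm, mul_one]⟩
      · rintro r ⟨Z, S, h, hSA, hh, hfac, rfl⟩
        obtain ⟨Th, hTfc, hThn⟩ := key Z S h hh hfac
        have hc := hnA_comp G Z Y Y (ContinuousLinearMap.id ℂ Y.carrier) S Th hSA
        have hid : ‖(ContinuousLinearMap.id ℂ Y.carrier)‖ ≤ 1 :=
          ContinuousLinearMap.norm_id_le
        have heq : (ContinuousLinearMap.id ℂ Y.carrier).comp (S.comp Th) = Tf := by
          rw [← hTfc]; ext x; simp
        rw [heq, hThn] at hc
        calc nA G Y Tf ≤ ‖(ContinuousLinearMap.id ℂ Y.carrier)‖ * nA Z Y S * LipNorm h := hc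
          _ ≤ 1 * nA Z Y S * LipNorm h := by
              apply mul_le_mul_of_nonneg_right (mul_le_mul_of_nonneg_right hid (hnA_nonneg Z Y S))
              rw [← hThn]; exact norm_nonneg _
          _ = nA Z Y S * LipNorm h := by ring
end
end

section
/- Let f ∈ HL₀(B_X, Y). Then f is compact holomorphic Lipschitz (i.e., Im_L(f) is relatively compact in Y) if and only if the transpose f^t : Y* → HL₀(B_X) is a compact operator. -/
open Metric Set Filter Topology

noncomputable section

universe u

lemma net_of_tb {α β : Type*} [PseudoMetricSpace β] (S : α → β) (s : Set α)
    (h : TotallyBounded (S '' s)) {ε : ℝ} (hε : 0 < ε) :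
    ∃ Φ : Set α, Φ.Finite ∧ Φ ⊆ s ∧ ∀ φ ∈ s, ∃ ψ ∈ Φ, dist (S φ) (S ψ) < ε := by
  obtain ⟨t, hts, htfin, hcov⟩ :=
    totallyBounded_iff_subset.1 h _ (Metric.dist_mem_uniformity hε)
  choose pick hpicks hpickS using fun (y : β) (hy : y ∈ t) => hts hy
  refine ⟨{a | ∃ y, ∃ hy : y ∈ t, pick y hy = a}, htfin.dependent_image pick, ?_, ?_⟩
  · rintro a ⟨y, hy, rfl⟩; exact hpicks y hy
  · intro φ hφ
    have : S φ ∈ ⋃ y ∈ t, { x | dist x y < ε } := hcov ⟨φ, hφ, rfl⟩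
    obtain ⟨y, hy, hd⟩ := mem_iUnion₂.1 this
    exact ⟨pick y hy, ⟨y, hy, rfl⟩, by rw [hpickS y hy]; exact hd⟩

section Aux

variable {X Y : Type*} [NormedAddCommGroup X] [NormedSpace ℂ X]
    [NormedAddCommGroup Y] [NormedSpace ℂ Y]

lemma memHL_comp (χ : Y →L[ℂ] ℂ) {f : X → Y} (hf : MemHL f) :
    MemHL (fun x => χ (f x)) := by
  obtain ⟨h0, hdiff, C, hC⟩ := hf
  refine ⟨by simp [h0], χ.differentiable.comp_differentiableOn hdiff, ‖χ‖ * C, ?_⟩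
  intro x hx y hy
  calc ‖χ (f x) - χ (f y)‖ = ‖χ (f x - f y)‖ := by rw [map_sub]
    _ ≤ ‖χ‖ * ‖f x - f y‖ := χ.le_opNorm _
    _ ≤ ‖χ‖ * (C * ‖x - y‖) :=
        mul_le_mul_of_nonneg_left (hC x hx y hy) (norm_nonneg χ)
    _ = ‖χ‖ * C * ‖x - y‖ := by ring

lemma quot_eq (χ : Y →L[ℂ] ℂ) (f : X → Y) {x y : X} (hxy : x ≠ y) :
    ‖χ (f x) - χ (f y)‖ / ‖x - y‖ = ‖χ (‖x - y‖⁻¹ • (f x - f y))‖ := by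
  have h1 : (0:ℝ) < ‖x - y‖ := norm_pos_iff.2 (sub_ne_zero.2 hxy)
  rw [ContinuousLinearMap.map_smul_of_tower, norm_smul, Real.norm_eq_abs, abs_of_nonneg (inv_nonneg.2 h1.le),
    ← map_sub, div_eq_inv_mul]

lemma lipImage_bounded {f : X → Y} (hf : MemHL f) :
    ∃ C : ℝ, 0 ≤ C ∧ ∀ v ∈ LipImage f, ‖v‖ ≤ C := by
  obtain ⟨-, -, C, hC⟩ := hf
  refine ⟨max C 0, le_max_right _ _, ?_⟩
  rintro v ⟨x, hx, y, hy, hxy, rfl⟩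
  have h1 : (0:ℝ) < ‖x - y‖ := norm_pos_iff.2 (sub_ne_zero.2 hxy)
  rw [norm_smul, Real.norm_eq_abs, abs_of_nonneg (inv_nonneg.2 h1.le)]
  calc ‖x - y‖⁻¹ * ‖f x - f y‖ ≤ ‖x - y‖⁻¹ * (C * ‖x - y‖) :=
        mul_le_mul_of_nonneg_left (hC x hx y hy) (inv_nonneg.2 h1.le)
    _ = C := by field_simp
    _ ≤ max C 0 := le_max_left _ _

lemma le_lipNorm (χ : Y →L[ℂ] ℂ) {f : X → Y} (hf : MemHL f)
    {v : Y} (hv : v ∈ LipImage f) : ‖χ v‖ ≤ LipNorm (fun x => χ (f x)) := by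
  obtain ⟨C, hC0, hC⟩ := lipImage_bounded hf
  obtain ⟨x, hx, y, hy, hxy, rfl⟩ := hv
  refine le_csSup ⟨‖χ‖ * C, ?_⟩ ?_
  · rintro q ⟨p, ⟨hp1, hp2, hp⟩, rfl⟩
    have := quot_eq χ f hp
    simp only [] at this ⊢
    rw [this]
    calc ‖χ (‖p.1 - p.2‖⁻¹ • (f p.1 - f p.2))‖ ≤ ‖χ‖ * ‖‖p.1 - p.2‖⁻¹ • (f p.1 - f p.2)‖ :=
          χ.le_opNorm _
      _ ≤ ‖χ‖ * C := mul_le_mul_of_nonneg_left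
          (hC _ ⟨p.1, hp1, p.2, hp2, hp, rfl⟩) (norm_nonneg χ)
  · exact ⟨(x, y), ⟨hx, hy, hxy⟩, by exact quot_eq χ f hxy⟩

lemma lipNorm_comp_le (χ : Y →L[ℂ] ℂ) {f : X → Y} {M : ℝ} (hM : 0 ≤ M)
    (h : ∀ v ∈ LipImage f, ‖χ v‖ ≤ M) : LipNorm (fun x => χ (f x)) ≤ M := by
  refine Real.sSup_le ?_ hM
  rintro q ⟨p, ⟨hp1, hp2, hp⟩, rfl⟩
  simp only []
  rw [quot_eq χ f hp]
  exact h _ ⟨p.1, hp1, p.2, hp2, hp, rfl⟩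

end Aux

set_option maxHeartbeats 2000000 in
/-- f ∈ HL₀(B_X, Y) is compact holomorphic Lipschitz (Im_L(f)
relatively compact) iff its transpose f^t : Y* → HL₀(B_X), y* ↦ y* ∘ f, is a
compact operator.  HL₀(B_X) is identified with the dual G₀(B_X)* via the canonical
isometric isomorphism Λ_X (hypothesized through linC), so that f^t corresponds to
y* ↦ T_{y* ∘ f}. -/
theorem compactHL_iff_transpose_compact {X Y G : Type*}
    [NormedAddCommGroup X] [NormedSpace ℂ X] [CompleteSpace X]
    [NormedAddCommGroup Y] [NormedSpace ℂ Y] [CompleteSpace Y]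
    [NormedAddCommGroup G] [NormedSpace ℂ G] [CompleteSpace G]
    (δX : X → G) (hδ : MemHL δX)
    (hdense : Dense (Submodule.span ℂ (δX '' ball (0 : X) 1) : Set G))
    (linC : (X → ℂ) → (G →L[ℂ] ℂ))
    (hlinC : ∀ g : X → ℂ, MemHL g → ∀ x ∈ ball (0 : X) 1, linC g (δX x) = g x)
    (hlinCnorm : ∀ g : X → ℂ, MemHL g → ‖linC g‖ = LipNorm g)
    (f : X → Y) (hf : MemHL f) :
    IsCompact (closure (LipImage f)) ↔
      IsCompactOperator (fun φ : Y →L[ℂ] ℂ => linC (fun x => φ (f x))) := by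
  classical
  set S : (Y →L[ℂ] ℂ) → (G →L[ℂ] ℂ) := fun φ => linC (fun x => φ (f x)) with hSdef
  have hSδ : ∀ (χ : Y →L[ℂ] ℂ), ∀ x ∈ ball (0:X) 1,
      linC (fun x => χ (f x)) (δX x) = χ (f x) :=
    fun χ x hx => hlinC _ (memHL_comp χ hf) x hx
  obtain ⟨Cδ, hCδ⟩ := hδ.2.2
  set Cδ' : ℝ := max Cδ 1 with hCδ'def
  have hCδ'pos : (0:ℝ) < Cδ' := lt_max_of_lt_right one_pos
  have hCδ' : ∀ x ∈ ball (0:X) 1, ∀ y ∈ ball (0:X) 1, ‖δX x - δX y‖ ≤ Cδ' * ‖x - y‖ :=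
    fun x hx y hy => (hCδ x hx y hy).trans
      (mul_le_mul_of_nonneg_right (le_max_left _ _) (norm_nonneg _))
  have hR1 : ∀ φ ψ : Y →L[ℂ] ℂ, ∀ v ∈ LipImage f, ‖(φ - ψ) v‖ ≤ Cδ' * ‖S φ - S ψ‖ := by
    rintro φ ψ v ⟨x, hx, y, hy, hxy, rfl⟩
    have h1 : (0:ℝ) < ‖x - y‖ := norm_pos_iff.2 (sub_ne_zero.2 hxy)
    have heval : (S φ - S ψ) (δX x - δX y) = (φ - ψ) (f x - f y) := by
      simp only [hSdef, ContinuousLinearMap.sub_apply, map_sub]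
      rw [hSδ φ x hx, hSδ φ y hy, hSδ ψ x hx, hSδ ψ y hy]
    rw [ContinuousLinearMap.map_smul_of_tower, norm_smul, Real.norm_eq_abs,
      abs_of_nonneg (inv_nonneg.2 h1.le), ← heval]
    calc ‖x - y‖⁻¹ * ‖(S φ - S ψ) (δX x - δX y)‖
        ≤ ‖x - y‖⁻¹ * (‖S φ - S ψ‖ * (Cδ' * ‖x - y‖)) := by
          refine mul_le_mul_of_nonneg_left ?_ (inv_nonneg.2 h1.le)
          exact ((S φ - S ψ).le_opNorm _).trans
            (mul_le_mul_of_nonneg_left (hCδ' x hx y hy) (norm_nonneg _))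
      _ = Cδ' * ‖S φ - S ψ‖ := by field_simp
  have hSsub : ∀ φ ψ : Y →L[ℂ] ℂ, S φ - S ψ = linC (fun x => (φ - ψ) (f x)) := by
    intro φ ψ
    refine ContinuousLinearMap.ext_on hdense ?_
    rintro g ⟨x, hx, rfl⟩
    have h := hSδ (φ - ψ) x hx
    simp only [ContinuousLinearMap.sub_apply] at h
    simp only [hSdef, ContinuousLinearMap.sub_apply]
    rw [hSδ φ x hx, hSδ ψ x hx, h]
  have hSnorm : ∀ φ ψ : Y →L[ℂ] ℂ, ‖S φ - S ψ‖ = LipNorm (fun x => (φ - ψ) (f x)) := by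
    intro φ ψ; rw [hSsub φ ψ]; exact hlinCnorm _ (memHL_comp _ hf)
  obtain ⟨Cf, hCf0, hCf⟩ := lipImage_bounded hf
  constructor
  · -- forward direction
    intro hK
    have htb : TotallyBounded (S '' closedBall 0 1) := by
      rw [Metric.totallyBounded_iff]
      intro ε hε
      have hLtb : TotallyBounded (LipImage f) := hK.totallyBounded.subset subset_closure
      obtain ⟨t, htfin, hts, hcov⟩ := net_of_tb (id : Y → Y) (LipImage f)
        (by rwa [Set.image_id]) (show (0:ℝ) < ε/8 by linarith)
      haveI := htfin.fintype
      set E : (Y →L[ℂ] ℂ) → (↥t → ℂ) := fun φ i => φ i.1 with hEdef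
      have hEtb : TotallyBounded (E '' closedBall 0 1) := by
        refine TotallyBounded.subset ?_ (isCompact_closedBall (0 : ↥t → ℂ) Cf).totallyBounded
        rintro w ⟨φ, hφ, rfl⟩
        rw [mem_closedBall_zero_iff]
        refine (pi_norm_le_iff_of_nonneg hCf0).2 fun i => ?_
        calc ‖φ i.1‖ ≤ ‖φ‖ * ‖i.1‖ := φ.le_opNorm _
          _ ≤ 1 * Cf := mul_le_mul (mem_closedBall_zero_iff.1 hφ) (hCf _ (hts i.2))
              (norm_nonneg _) zero_le_one
          _ = Cf := one_mul Cf
      obtain ⟨Φ, hΦfin, hΦsub, hΦnet⟩ := net_of_tb E (closedBall 0 1) hEtb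
        (show (0:ℝ) < ε/2 by linarith)
      refine ⟨S '' Φ, hΦfin.image S, ?_⟩
      rintro w ⟨φ, hφ, rfl⟩
      obtain ⟨ψ, hψ, hdist⟩ := hΦnet φ hφ
      refine mem_iUnion₂.2 ⟨S ψ, ⟨ψ, hψ, rfl⟩, ?_⟩
      rw [mem_ball, dist_eq_norm, hSnorm]
      have hle : LipNorm (fun x => (φ - ψ) (f x)) ≤ ε/2 + 2*(ε/8) := by
        refine lipNorm_comp_le _ (by linarith) ?_
        intro v hv
        obtain ⟨w0, hw0, hw0d⟩ := hcov v hv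
        have h1 : ‖φ w0 - ψ w0‖ ≤ ε/2 := by
          have h := (dist_le_pi_dist (E φ) (E ψ) ⟨w0, hw0⟩).trans hdist.le
          simpa [hEdef, dist_eq_norm] using h
        have hnφψ : ‖φ - ψ‖ ≤ 2 := by
          calc ‖φ - ψ‖ ≤ ‖φ‖ + ‖ψ‖ := norm_sub_le _ _
            _ ≤ 1 + 1 := add_le_add (mem_closedBall_zero_iff.1 hφ)
                (mem_closedBall_zero_iff.1 (hΦsub hψ))
            _ = 2 := by norm_num
        have h2 : ‖(φ - ψ) (v - w0)‖ ≤ 2 * (ε/8) := by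
          calc ‖(φ - ψ) (v - w0)‖ ≤ ‖φ - ψ‖ * ‖v - w0‖ := (φ - ψ).le_opNorm _
            _ ≤ 2 * (ε/8) := mul_le_mul hnφψ
                (by simpa [dist_eq_norm] using hw0d.le) (norm_nonneg _) (by norm_num)
        calc ‖(φ - ψ) v‖ = ‖(φ w0 - ψ w0) + (φ - ψ) (v - w0)‖ := by
              congr 1
              simp only [ContinuousLinearMap.sub_apply, map_sub]
              ring
          _ ≤ ‖φ w0 - ψ w0‖ + ‖(φ - ψ) (v - w0)‖ := norm_add_le _ _
          _ ≤ ε/2 + 2*(ε/8) := add_le_add h1 h2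
      linarith
    exact ⟨closure (S '' closedBall 0 1),
      TotallyBounded.isCompact_of_isClosed htb.closure isClosed_closure,
      mem_of_superset (closedBall_mem_nhds (0 : Y →L[ℂ] ℂ) one_pos)
        fun φ hφ => subset_closure ⟨φ, hφ, rfl⟩⟩
  · -- reverse direction
    intro hS
    obtain ⟨K, hKcomp, hKmem⟩ := hS
    obtain ⟨r, hr, hball⟩ := Metric.mem_nhds_iff.1 hKmem
    have hStb : TotallyBounded (S '' ball 0 r) := by
      refine hKcomp.totallyBounded.subset ?_
      rintro w ⟨φ, hφ, rfl⟩
      exact hball hφ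
    have hLtb : TotallyBounded (LipImage f) := by
      rw [Metric.totallyBounded_iff]
      intro ε hε
      have hε₁ : (0:ℝ) < ε * r / (16 * Cδ') := by positivity
      obtain ⟨Φ, hΦfin, hΦsub, hΦnet⟩ := net_of_tb S (ball 0 r) hStb hε₁
      haveI := hΦfin.fintype
      set W : Y → (↥Φ → ℂ) := fun v ψ => ψ.1 v with hWdef
      have hWtb : TotallyBounded (W '' LipImage f) := by
        refine TotallyBounded.subset ?_
          (isCompact_closedBall (0 : ↥Φ → ℂ) (r * Cf)).totallyBounded
        rintro w ⟨v, hv, rfl⟩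
        rw [mem_closedBall_zero_iff]
        refine (pi_norm_le_iff_of_nonneg (by positivity)).2 fun ψ => ?_
        calc ‖ψ.1 v‖ ≤ ‖ψ.1‖ * ‖v‖ := ψ.1.le_opNorm _
          _ ≤ r * Cf := mul_le_mul (le_of_lt (mem_ball_zero_iff.1 (hΦsub ψ.2)))
              (hCf v hv) (norm_nonneg _) hr.le
      obtain ⟨V, hVfin, hVsub, hVnet⟩ := net_of_tb W (LipImage f) hWtb
        (show (0:ℝ) < ε * r / 8 by positivity)
      refine ⟨V, hVfin, ?_⟩
      intro v hv
      obtain ⟨w, hwV, hwd⟩ := hVnet v hv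
      refine mem_iUnion₂.2 ⟨w, hwV, ?_⟩
      rw [mem_ball, dist_eq_norm]
      rcases eq_or_ne (v - w) 0 with h0 | h0
      · rw [h0, norm_zero]; exact hε
      obtain ⟨φ, hφ1, hφx⟩ := exists_dual_vector ℂ (v - w) (norm_ne_zero_iff.2 h0)
      set φ' : Y →L[ℂ] ℂ := ((r/2 : ℝ) : ℂ) • φ with hφ'def
      have hφ'mem : φ' ∈ ball (0 : Y →L[ℂ] ℂ) r := by
        rw [mem_ball_zero_iff, hφ'def, norm_smul ((r/2:ℝ):ℂ) φ, Complex.norm_real, Real.norm_eq_abs,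
          abs_of_pos (by linarith : (0:ℝ) < r/2), hφ1, mul_one]
        linarith
      obtain ⟨ψ, hψΦ, hdS⟩ := hΦnet φ' hφ'mem
      have hkey : ∀ u ∈ LipImage f, ‖(φ' - ψ) u‖ ≤ ε * r / 16 := by
        intro u hu
        calc ‖(φ' - ψ) u‖ ≤ Cδ' * ‖S φ' - S ψ‖ := hR1 φ' ψ u hu
          _ ≤ Cδ' * (ε * r / (16 * Cδ')) := by
              refine mul_le_mul_of_nonneg_left ?_ hCδ'pos.le
              rw [← dist_eq_norm]
              exact hdS.le
          _ = ε * r / 16 := by field_simp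
      have hψvw : ‖ψ v - ψ w‖ ≤ ε * r / 8 := by
        have h := (dist_le_pi_dist (W v) (W w) ⟨ψ, hψΦ⟩).trans hwd.le
        simpa [hWdef, dist_eq_norm] using h
      have hnorm : ‖φ (v - w)‖ = ‖v - w‖ := by
        rw [hφx]
        simp [Complex.norm_real, abs_of_nonneg (norm_nonneg _)]
      have hφ'vw : ‖φ' (v - w)‖ = (r/2) * ‖v - w‖ := by
        rw [hφ'def]
        rw [ContinuousLinearMap.smul_apply, norm_smul ((r/2:ℝ):ℂ) (φ (v - w)), Complex.norm_real, Real.norm_eq_abs,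
          abs_of_pos (by linarith : (0:ℝ) < r/2), hnorm]
      have hsplit : ‖φ' (v - w)‖ ≤ ε * r / 4 := by
        calc ‖φ' (v - w)‖ = ‖((φ' - ψ) v - (φ' - ψ) w) + (ψ v - ψ w)‖ := by
              congr 1
              simp only [map_sub, ContinuousLinearMap.sub_apply]
              ring
          _ ≤ ‖(φ' - ψ) v - (φ' - ψ) w‖ + ‖ψ v - ψ w‖ := norm_add_le _ _
          _ ≤ (‖(φ' - ψ) v‖ + ‖(φ' - ψ) w‖) + ‖ψ v - ψ w‖ :=
              add_le_add_left (norm_sub_le _ _) _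
          _ ≤ (ε * r / 16 + ε * r / 16) + ε * r / 8 :=
              add_le_add (add_le_add (hkey v hv) (hkey w (hVsub hwV))) hψvw
          _ = ε * r / 4 := by ring
      rw [hφ'vw] at hsplit
      nlinarith [norm_nonneg (v - w)]
    exact TotallyBounded.isCompact_of_isClosed hLtb.closure isClosed_closure
end
end

section
/- Let f ∈ HL₀(B_X, Y). Then Im_L(f) is relatively compact in Y if and only if f^t : Y* → HL₀(B_X) is continuous from the bounded-weak* topology on Y* to the norm topology of HL₀(B_X). -/
open Metric Set Filter Topology

noncomputable section

universe u

/-- Im_L(f) is relatively compact in Y iff the transpose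
f^t : Y* → HL₀(B_X) is continuous from the bounded-weak* topology on Y* to the norm
topology.  HL₀(B_X) is identified with G₀(B_X)* via the canonical isometric
isomorphism Λ_X (hypothesized through linC).  Since the bounded-weak* topology is
the finest topology agreeing with w* on bounded sets, bw*-to-norm continuity is
expressed as: for every r, the restriction of f^t to the image in the weak* dual of
the closed ball of radius r is continuous into the norm topology. -/
theorem compactHL_iff_transpose_bwstar_norm_continuous {X Y G : Type*}
    [NormedAddCommGroup X] [NormedSpace ℂ X] [CompleteSpace X]
    [NormedAddCommGroup Y] [NormedSpace ℂ Y] [CompleteSpace Y]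
    [NormedAddCommGroup G] [NormedSpace ℂ G] [CompleteSpace G]
    (δX : X → G) (hδ : MemHL δX)
    (hdense : Dense (Submodule.span ℂ (δX '' ball (0 : X) 1) : Set G))
    (linC : (X → ℂ) → (G →L[ℂ] ℂ))
    (hlinC : ∀ g : X → ℂ, MemHL g → ∀ x ∈ ball (0 : X) 1, linC g (δX x) = g x)
    (hlinCnorm : ∀ g : X → ℂ, MemHL g → ‖linC g‖ = LipNorm g)
    (f : X → Y) (hf : MemHL f) :
    IsCompact (closure (LipImage f)) ↔
      ∀ r : ℝ, ContinuousOn (fun φ : WeakDual ℂ Y => linC (fun x => φ (f x)))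
        (StrongDual.toWeakDual '' closedBall (0 : StrongDual ℂ Y) r) := by
  classical
  obtain ⟨hf0, hfd, C0, hC0⟩ := hf
  set C := max C0 0 with hCdef
  have hCnn : (0:ℝ) ≤ C := le_max_right _ _
  have hC : ∀ x ∈ ball (0:X) 1, ∀ y ∈ ball (0:X) 1, ‖f x - f y‖ ≤ C * ‖x - y‖ := fun x hx y hy =>
    (hC0 x hx y hy).trans (mul_le_mul_of_nonneg_right (le_max_left _ _) (norm_nonneg _))
  set S := LipImage f with hSdef
  -- bound on S
  have hSbound : ∀ v ∈ S, ‖v‖ ≤ C := by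
    rintro v ⟨x, hx, y, hy, hxy, rfl⟩
    have h0 : ‖x - y‖ ≠ 0 := by simpa [sub_eq_zero] using hxy
    have hpos : 0 < ‖x - y‖ := lt_of_le_of_ne (norm_nonneg _) (Ne.symm h0)
    rw [norm_smul, norm_inv, norm_norm]
    calc ‖x - y‖⁻¹ * ‖f x - f y‖ ≤ ‖x - y‖⁻¹ * (C * ‖x - y‖) :=
          mul_le_mul_of_nonneg_left (hC x hx y hy) (by positivity)
      _ = C := by field_simp
  -- composition with a functional is in HL
  have hmem : ∀ ξ : StrongDual ℂ Y, MemHL (fun x => ξ (f x)) := by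
    intro ξ
    refine ⟨by simp [hf0], ξ.differentiable.comp_differentiableOn hfd, ‖ξ‖ * C, ?_⟩
    intro x hx y hy
    calc ‖ξ (f x) - ξ (f y)‖ = ‖ξ (f x - f y)‖ := by rw [map_sub]
      _ ≤ ‖ξ‖ * ‖f x - f y‖ := ξ.le_opNorm _
      _ ≤ ‖ξ‖ * (C * ‖x - y‖) := mul_le_mul_of_nonneg_left (hC x hx y hy) (norm_nonneg ξ)
      _ = ‖ξ‖ * C * ‖x - y‖ := (mul_assoc _ _ _).symm
  -- the image of the pair set under the quotient function equals norms over S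
  have himg : ∀ ξ : StrongDual ℂ Y,
      ((fun p : X × X => ‖ξ (f p.1) - ξ (f p.2)‖ / ‖p.1 - p.2‖) ''
        {p : X × X | p.1 ∈ ball (0 : X) 1 ∧ p.2 ∈ ball (0 : X) 1 ∧ p.1 ≠ p.2})
      = (fun v => ‖ξ v‖) '' S := by
    intro ξ
    have key : ∀ x y : X, x ≠ y →
        ‖ξ (f x) - ξ (f y)‖ / ‖x - y‖ = ‖ξ (‖x - y‖⁻¹ • (f x - f y))‖ := by
      intro x y hxy
      have h0 : ‖x - y‖ ≠ 0 := by simpa [sub_eq_zero] using hxy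
      rw [ξ.map_smul_of_tower, norm_smul, norm_inv, norm_norm, ← map_sub,
        div_eq_inv_mul]
    ext t
    constructor
    · rintro ⟨⟨x, y⟩, ⟨hx, hy, hxy⟩, rfl⟩
      exact ⟨‖x - y‖⁻¹ • (f x - f y), ⟨x, hx, y, hy, hxy, rfl⟩, (key x y hxy).symm⟩
    · rintro ⟨v, ⟨x, hx, y, hy, hxy, rfl⟩, rfl⟩
      exact ⟨(x, y), ⟨hx, hy, hxy⟩, key x y hxy⟩
  have hLip : ∀ ξ : StrongDual ℂ Y,
      LipNorm (fun x => ξ (f x)) = sSup ((fun v => ‖ξ v‖) '' S) := by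
    intro ξ
    rw [LipNorm, himg ξ]
  -- linearity of the transpose map (difference)
  have hsub : ∀ ξ η : StrongDual ℂ Y,
      linC (fun x => ξ (f x)) - linC (fun x => η (f x)) = linC (fun x => (ξ - η) (f x)) := by
    intro ξ η
    have hmemsub : MemHL (fun x => (ξ - η) (f x)) := hmem (ξ - η)
    have heq0 : EqOn (⇑(linC (fun x => ξ (f x)) - linC (fun x => η (f x))))
        (⇑(linC (fun x => (ξ - η) (f x)))) (δX '' ball (0:X) 1) := by
      rintro g ⟨x, hx, rfl⟩
      have e3 := hlinC _ hmemsub x hx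
      simp only [ContinuousLinearMap.sub_apply] at e3 ⊢
      rw [hlinC _ (hmem ξ) x hx, hlinC _ (hmem η) x hx, e3]
    have heqspan : EqOn (⇑(linC (fun x => ξ (f x)) - linC (fun x => η (f x))))
        (⇑(linC (fun x => (ξ - η) (f x))))
        (Submodule.span ℂ (δX '' ball (0:X) 1) : Set G) := by
      intro g hg
      exact LinearMap.eqOn_span
        (f := ((linC (fun x => ξ (f x)) - linC (fun x => η (f x))) : G →ₗ[ℂ] ℂ))
        (g := ((linC (fun x => (ξ - η) (f x))) : G →ₗ[ℂ] ℂ)) heq0 hg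
    have hfeq := Continuous.ext_on hdense (ContinuousLinearMap.continuous _)
      (ContinuousLinearMap.continuous _) heqspan
    exact ContinuousLinearMap.ext fun g => congrFun hfeq g
  have hdist : ∀ ξ η : StrongDual ℂ Y,
      ‖linC (fun x => ξ (f x)) - linC (fun x => η (f x))‖
        = sSup ((fun v => ‖(ξ - η) v‖) '' S) := by
    intro ξ η
    rw [hsub ξ η, hlinCnorm _ (hmem (ξ - η)), hLip (ξ - η)]
  have hbdd : ∀ ξ : StrongDual ℂ Y, BddAbove ((fun v => ‖ξ v‖) '' S) := by
    intro ξ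
    refine ⟨‖ξ‖ * C, ?_⟩
    rintro t ⟨v, hv, rfl⟩
    calc ‖ξ v‖ ≤ ‖ξ‖ * ‖v‖ := ξ.le_opNorm v
      _ ≤ ‖ξ‖ * C := mul_le_mul_of_nonneg_left (hSbound v hv) (norm_nonneg ξ)
  -- per-element bound
  have helem : ∀ ξ η : StrongDual ℂ Y, ∀ v ∈ S,
      ‖ξ v - η v‖ ≤ ‖linC (fun x => ξ (f x)) - linC (fun x => η (f x))‖ := by
    intro ξ η v hv
    rw [hdist ξ η]
    have : ‖(ξ - η) v‖ ∈ (fun v => ‖(ξ - η) v‖) '' S := mem_image_of_mem _ hv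
    have h := le_csSup (hbdd (ξ - η)) this
    simpa using h
  constructor
  · -- compact ⇒ continuity
    intro hcompact r
    intro φ₀ hφ₀
    obtain ⟨ξ₀, hξ₀r, rfl⟩ := hφ₀
    have hr : (0:ℝ) ≤ r := le_trans (norm_nonneg ξ₀) (by simpa using mem_closedBall_iff_norm.mp hξ₀r)
    rw [ContinuousWithinAt, Metric.tendsto_nhds]
    intro ε hε
    set δ : ℝ := (ε/2) / (2*r+1) with hδdef
    have hδpos : 0 < δ := by positivity
    -- finite cover of closure S
    obtain ⟨t, htK, hcover⟩ := hcompact.elim_nhds_subcover (fun v => ball v δ)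
      (fun v _ => ball_mem_nhds v hδpos)
    -- neighborhood in weak dual
    set U : Set (WeakDual ℂ Y) := ⋂ v ∈ t, {φ : WeakDual ℂ Y | ‖φ v - ξ₀ v‖ < ε/2} with hUdef
    have hUopen : IsOpen U := by
      refine isOpen_biInter_finset fun v _ => ?_
      have : Continuous fun φ : WeakDual ℂ Y => ‖φ v - ξ₀ v‖ :=
        ((WeakDual.eval_continuous v).sub continuous_const).norm
      exact isOpen_lt this continuous_const
    have hφ₀U : StrongDual.toWeakDual ξ₀ ∈ U := by
      simp only [hUdef, mem_iInter, mem_setOf_eq]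
      intro v _
      simpa using half_pos hε
    have hUmem : U ∈ 𝓝[StrongDual.toWeakDual ''
        closedBall (0 : StrongDual ℂ Y) r] (StrongDual.toWeakDual ξ₀) :=
      mem_nhdsWithin_of_mem_nhds (hUopen.mem_nhds hφ₀U)
    filter_upwards [hUmem, self_mem_nhdsWithin] with φ hφU hφs
    obtain ⟨ξ, hξr, rfl⟩ := hφs
    rw [dist_eq_norm]
    have hcoe : ∀ η : StrongDual ℂ Y,
        (fun x => StrongDual.toWeakDual η (f x)) = (fun x => η (f x)) := fun η => rfl
    rw [hcoe ξ, hcoe ξ₀, hdist ξ ξ₀]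
    have hrξ : ‖ξ‖ ≤ r := by simpa using mem_closedBall_iff_norm.mp hξr
    have hrξ₀ : ‖ξ₀‖ ≤ r := by simpa using mem_closedBall_iff_norm.mp hξ₀r
    have hclt : (2*r) * δ + ε/2 < ε := by
      have h1 : (2*r) * δ < ε/2 := by
        rw [hδdef]
        rw [mul_div_assoc']
        rw [div_lt_iff₀ (by positivity)]
        have : 2*r < 2*r+1 := by linarith
        calc 2*r*(ε/2) < (2*r+1) * (ε/2) := by
              apply mul_lt_mul_of_pos_right _ (by positivity)
              linarith
          _ = ε/2 * (2*r+1) := by ring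
      linarith
    refine lt_of_le_of_lt ?_ hclt
    apply Real.sSup_le _ (by positivity)
    rintro s ⟨v, hv, rfl⟩
    have hvK : v ∈ closure S := subset_closure hv
    have : v ∈ ⋃ w ∈ t, ball w δ := hcover hvK
    rw [mem_iUnion₂] at this
    obtain ⟨w, hwt, hvw⟩ := this
    simp only [hUdef, mem_iInter, mem_setOf_eq] at hφU
    have h1 : ‖ξ w - ξ₀ w‖ < ε/2 := hφU w hwt
    have hvwle : ‖v - w‖ ≤ δ := by
      have := mem_ball_iff_norm.mp hvw
      linarith
    have hnorm : ‖ξ - ξ₀‖ ≤ 2*r := by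
      calc ‖ξ - ξ₀‖ ≤ ‖ξ‖ + ‖ξ₀‖ := norm_sub_le _ _
        _ ≤ 2*r := by linarith
    calc ‖(ξ - ξ₀) v‖ = ‖(ξ - ξ₀) (v - w) + (ξ - ξ₀) w‖ := by rw [← map_add, sub_add_cancel]
      _ ≤ ‖(ξ - ξ₀) (v - w)‖ + ‖(ξ - ξ₀) w‖ := norm_add_le _ _
      _ ≤ ‖ξ - ξ₀‖ * ‖v - w‖ + ε/2 := by
          apply add_le_add ((ξ - ξ₀).le_opNorm _)
          simpa using h1.le
      _ ≤ (2*r) * δ + ε/2 := by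
          apply add_le_add_left
          exact mul_le_mul hnorm hvwle (norm_nonneg _) (by positivity)
  · -- continuity ⇒ compact
    intro hcont
    refine TotallyBounded.isCompact_of_isClosed (TotallyBounded.closure ?_) isClosed_closure
    rw [Metric.totallyBounded_iff]
    intro ε hε
    set ε' : ℝ := ε/4 with hε'def
    have hε'pos : (0:ℝ) < ε' := by positivity
    set Bw : Set (WeakDual ℂ Y) :=
      StrongDual.toWeakDual '' closedBall (0 : StrongDual ℂ Y) 1 with hBwdef
    have hBw : IsCompact Bw := by
      have heq : Bw = WeakDual.toStrongDual (𝕜 := ℂ) (E := Y) ⁻¹' closedBall 0 1 := by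
        ext φ
        constructor
        · rintro ⟨ξ, hξ, rfl⟩; exact hξ
        · intro h; exact ⟨WeakDual.toStrongDual φ, h, rfl⟩
      rw [heq]
      exact WeakDual.isCompact_closedBall 0 1
    have hnb : ∀ φ ∈ Bw, ∃ O : Set (WeakDual ℂ Y), IsOpen O ∧ φ ∈ O ∧
        ∀ ψ ∈ O, ψ ∈ Bw →
          ‖linC (fun x => ψ (f x)) - linC (fun x => φ (f x))‖ < ε' := by
      intro φ hφ
      have hcw : ContinuousWithinAt
          (fun φ : WeakDual ℂ Y => linC (fun x => φ (f x))) Bw φ := hcont 1 φ hφ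
      have h2 : {ψ : WeakDual ℂ Y |
          ‖linC (fun x => ψ (f x)) - linC (fun x => φ (f x))‖ < ε'} ∈ 𝓝[Bw] φ := by
        have h3 := Metric.tendsto_nhds.mp hcw ε' hε'pos
        simp only [dist_eq_norm] at h3
        exact h3
      rcases mem_nhdsWithin.mp h2 with ⟨O, hOopen, hφO, hsub2⟩
      exact ⟨O, hOopen, hφO, fun ψ hψO hψBw => hsub2 ⟨hψO, hψBw⟩⟩
    choose O hOopen hmemO hO using hnb
    obtain ⟨t, hcover⟩ := hBw.elim_nhds_subcover' (fun φ hφ => O φ hφ)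
      (fun φ hφ => (hOopen φ hφ).mem_nhds (hmemO φ hφ))
    -- the coordinate map
    set g : Y → (↥t → ℂ) := fun v φ => ((φ : ↥Bw) : WeakDual ℂ Y) v with hgdef
    have hgnorm : ∀ (φ : ↥t) (v : Y), ‖g v φ‖ ≤ ‖v‖ := by
      intro φ v
      obtain ⟨ξ, hξ, hφeq⟩ := (φ : ↥Bw).2
      have hξ1 : ‖ξ‖ ≤ 1 := by simpa using mem_closedBall_iff_norm.mp hξ
      have hgφ : g v φ = ξ v := by
        show ((φ : ↥Bw) : WeakDual ℂ Y) v = ξ v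
        rw [← hφeq]
        rfl
      rw [hgφ]
      calc ‖ξ v‖ ≤ ‖ξ‖ * ‖v‖ := ξ.le_opNorm v
        _ ≤ 1 * ‖v‖ := mul_le_mul_of_nonneg_right hξ1 (norm_nonneg v)
        _ = ‖v‖ := one_mul _
    have hgb : TotallyBounded (g '' S) := by
      refine TotallyBounded.subset ?_ (isCompact_closedBall (0 : ↥t → ℂ) C).totallyBounded
      rintro w ⟨v, hv, rfl⟩
      rw [mem_closedBall]
      apply dist_pi_le_iff hCnn |>.mpr
      intro φ
      rw [Pi.zero_apply, dist_zero_right]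
      exact (hgnorm φ v).trans (hSbound v hv)
    obtain ⟨t', ht'sub, ht'fin, ht'cover⟩ := totallyBounded_iff_subset.mp hgb
      {p : (↥t → ℂ) × (↥t → ℂ) | dist p.1 p.2 < ε'} (Metric.dist_mem_uniformity hε'pos)
    choose! vc hvcS hgvc using fun c (hc : c ∈ t') => ht'sub hc
    refine ⟨vc '' t', ht'fin.image vc, ?_⟩
    intro v hv
    have hgv : g v ∈ ⋃ c ∈ t', {x | (x, c) ∈ {p : (↥t → ℂ) × (↥t → ℂ) | dist p.1 p.2 < ε'}} :=
      ht'cover (mem_image_of_mem g hv)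
    rw [mem_iUnion₂] at hgv
    obtain ⟨c, hct', hdc⟩ := hgv
    simp only [mem_setOf_eq] at hdc
    rw [mem_iUnion₂]
    refine ⟨vc c, mem_image_of_mem _ hct', ?_⟩
    rw [mem_ball, dist_eq_norm]
    have hkey : ∀ ξ : StrongDual ℂ Y, ‖ξ‖ ≤ 1 → ‖ξ (v - vc c)‖ ≤ 3 * ε' := by
      intro ξ hξ1
      have hξBw : StrongDual.toWeakDual ξ ∈ Bw :=
        ⟨ξ, mem_closedBall_iff_norm.mpr (by simpa using hξ1), rfl⟩
      have hmem2 := hcover hξBw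
      rw [mem_iUnion₂] at hmem2
      obtain ⟨φ, hφt, hξO⟩ := hmem2
      set η : StrongDual ℂ Y := WeakDual.toStrongDual (φ : WeakDual ℂ Y) with hηdef
      have h1 := hO (φ : WeakDual ℂ Y) φ.2 (StrongDual.toWeakDual ξ) hξO hξBw
      have h1' : ‖linC (fun x => ξ (f x)) - linC (fun x => η (f x))‖ < ε' := h1
      have hv1 : ‖ξ v - η v‖ ≤ ε' := (helem ξ η v hv).trans h1'.le
      have hv2 : ‖ξ (vc c) - η (vc c)‖ ≤ ε' := (helem ξ η (vc c) (hvcS c hct')).trans h1'.le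
      have hmid : ‖η v - η (vc c)‖ < ε' := by
        have hco : dist (g v ⟨φ, hφt⟩) (g (vc c) ⟨φ, hφt⟩) ≤ dist (g v) (g (vc c)) :=
          dist_le_pi_dist (g v) (g (vc c)) ⟨φ, hφt⟩
        have hdd : dist (g v) (g (vc c)) < ε' := by rw [hgvc c hct']; exact hdc
        have hlt := lt_of_le_of_lt hco hdd
        have heq1 : g v ⟨φ, hφt⟩ = η v := rfl
        have heq2 : g (vc c) ⟨φ, hφt⟩ = η (vc c) := rfl
        rw [heq1, heq2, dist_eq_norm] at hlt
        exact hlt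
      calc ‖ξ (v - vc c)‖
          = ‖(ξ v - η v) + (η v - η (vc c)) + (η (vc c) - ξ (vc c))‖ := by
            rw [map_sub]; ring_nf
        _ ≤ ‖(ξ v - η v) + (η v - η (vc c))‖ + ‖η (vc c) - ξ (vc c)‖ := norm_add_le _ _
        _ ≤ ‖ξ v - η v‖ + ‖η v - η (vc c)‖ + ‖η (vc c) - ξ (vc c)‖ :=
            add_le_add_left (norm_add_le _ _) _
        _ ≤ ε' + ε' + ε' := by
            refine add_le_add (add_le_add hv1 hmid.le) ?_
            rw [norm_sub_rev]
            exact hv2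
        _ = 3 * ε' := by ring
    have hdual : ∀ ξ : StrongDual ℂ Y, ‖ξ (v - vc c)‖ ≤ (3*ε') * ‖ξ‖ := by
      intro ξ
      rcases eq_or_ne ξ 0 with rfl | hξ0
      · simp
      · have hξpos : 0 < ‖ξ‖ := norm_pos_iff.mpr hξ0
        have h1 : ‖(‖ξ‖⁻¹ • ξ : StrongDual ℂ Y)‖ ≤ 1 := by
          rw [norm_smul, norm_inv, norm_norm, inv_mul_cancel₀ hξpos.ne']
        have h2 := hkey (‖ξ‖⁻¹ • ξ) h1
        rw [ContinuousLinearMap.smul_apply, norm_smul, norm_inv, norm_norm] at h2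
        calc ‖ξ (v - vc c)‖ = ‖ξ‖ * (‖ξ‖⁻¹ * ‖ξ (v - vc c)‖) := by field_simp
          _ ≤ ‖ξ‖ * (3*ε') := mul_le_mul_of_nonneg_left h2 (norm_nonneg _)
          _ = (3*ε') * ‖ξ‖ := mul_comm _ _
    have hfinal : ‖v - vc c‖ ≤ 3*ε' := NormedSpace.norm_le_dual_bound ℂ _ (by positivity) hdual
    have h3ε : 3*ε' < ε := by rw [hε'def]; linarith
    linarith
end
end
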